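/- arXiv:2405.13291 — 2 statements merged into one kernel-verified Lean document; each statement's English description precedes it below -/
import Mathlib

section
/- For distinct i, j ∈ {1,…,n}, the linear span of the vectors {w_α : α ⊆ {1,…,n}, |α| = l+1, {i,j} ⊆ α} is exactly the (−1)-eigenspace of the transposition (i j) acting on W_{n,l}; this eigenspace has dimension C(n−2, l−1). -/
noncomputable section

open ExteriorAlgebra

/-- The sum-of-coordinates linear functional on `ℂ^n`. -/
def sumLin (n : ℕ) : (Fin n → ℂ) →ₗ[ℂ] ℂ where
  toFun x := ∑ i, x i
  map_add' x y := by simp [Finset.sum_add_distrib]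
  map_smul' c x := by simp [Finset.mul_sum]

/-- The standard representation `V_n = {x : ℂ^n | x_1 + ⋯ + x_n = 0}`. -/
def stdRep (n : ℕ) : Submodule ℂ (Fin n → ℂ) := LinearMap.ker (sumLin n)

/-- The exterior algebra of `ℂ^n`; the ambient home of `⋀^l ℂ^n`. -/
abbrev EA (n : ℕ) := ExteriorAlgebra ℂ (Fin n → ℂ)

/-- `W_{n,l} = ⋀^l V_n`, realized inside `⋀^l ℂ^n ⊆ ExteriorAlgebra ℂ ℂ^n`. -/
def Wsub (n l : ℕ) : Submodule ℂ (EA n) :=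
  (⋀[ℂ]^l ↥(stdRep n)).map (ExteriorAlgebra.map (stdRep n).subtype).toLinearMap

/-- The action of a permutation `σ ∈ 𝔖_n` on `⋀ ℂ^n`, induced by `(σ • x) i = x (σ⁻¹ i)`
(so that `σ • e_j = e_{σ j}`). -/
def permMap (n : ℕ) (σ : Equiv.Perm (Fin n)) : EA n →ₗ[ℂ] EA n :=
  (ExteriorAlgebra.map (LinearMap.funLeft ℂ ℂ ⇑σ⁻¹)).toLinearMap

/-- The standard basis vector `e_i` of `ℂ^n`. -/
def evec (n : ℕ) (i : Fin n) : Fin n → ℂ := Pi.single i 1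

/-- For an `(l+1)`-subset `α = {a_0 < a_1 < ⋯ < a_l}` of `{1,…,n}`,
the family of vectors `e_{a_i} − e_{a_0}`, `i = 1, …, l`. -/
def uvecs (n l : ℕ) (α : Finset (Fin n)) (hα : α.card = l + 1) : Fin l → (Fin n → ℂ) :=
  fun i => evec n ↑(α.orderIsoOfFin hα i.succ) - evec n ↑(α.orderIsoOfFin hα 0)

/-- The vector `w_α = (e_{a_1} − e_{a_0}) ∧ ⋯ ∧ (e_{a_l} − e_{a_0})`. -/
def wvec (n l : ℕ) (α : Finset (Fin n)) (hα : α.card = l + 1) : EA n :=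
  ιMulti ℂ l (uvecs n l α hα)

/-- The standard Hermitian inner product on `ℂ^n` against a fixed vector `u`
(linear in the first slot). -/
def stdInner (n : ℕ) (u : Fin n → ℂ) : (Fin n → ℂ) →ₗ[ℂ] ℂ where
  toFun x := ∑ k, x k * (starRingEnd ℂ) (u k)
  map_add' x y := by simp [add_mul, Finset.sum_add_distrib]
  map_smul' c x := by simp [Finset.mul_sum, mul_assoc]

/-- The linear map `x ↦ (⟨x, u_1⟩, …, ⟨x, u_l⟩)`. -/
def rowsMap (n l : ℕ) (u : Fin l → (Fin n → ℂ)) : (Fin n → ℂ) →ₗ[ℂ] (Fin l → ℂ) :=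
  LinearMap.pi fun j => stdInner n (u j)

/-- The alternating map `(v_1, …, v_l) ↦ det (⟨v_i, u_j⟩)_{ij}`. -/
def detPair (n l : ℕ) (u : Fin l → (Fin n → ℂ)) : (Fin n → ℂ) [⋀^Fin l]→ₗ[ℂ] ℂ :=
  (Matrix.detRowAlternating : (Fin l → ℂ) [⋀^Fin l]→ₗ[ℂ] ℂ).compLinearMap (rowsMap n l u)

/-- The linear functional `v ↦ ⟨v, u_1 ∧ ⋯ ∧ u_l⟩` on the exterior algebra: the Hermitian
inner product on `⋀^l ℂ^n` induced by the standard inner product, paired against a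
fixed pure wedge, extended by zero in other degrees. -/
def pairFun (n l : ℕ) (u : Fin l → (Fin n → ℂ)) : EA n →ₗ[ℂ] ℂ :=
  liftAlternating (fun i => if h : l = i then h ▸ detPair n l u else 0)

/-- The hyperplane `H_α = {v ∈ W_{n,l} : ⟨v, w_α⟩ = 0}`. -/
def Hplane (n l : ℕ) (α : Finset (Fin n)) (hα : α.card = l + 1) : Submodule ℂ (EA n) :=
  Wsub n l ⊓ LinearMap.ker (pairFun n l (uvecs n l α hα))
/-- The linear map `ℂ^n → ℂ^m` sending `e_i` to `e_{f i}`. -/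
def pushLin (n m : ℕ) (f : Fin n → Fin m) : (Fin n → ℂ) →ₗ[ℂ] (Fin m → ℂ) where
  toFun x := fun j => ∑ i ∈ Finset.univ.filter (fun i => f i = j), x i
  map_add' x y := by funext j; simp [Finset.sum_add_distrib]
  map_smul' c x := by funext j; simp [Finset.mul_sum]

/-- The induced map `f_* : ⋀ ℂ^n → ⋀ ℂ^m` (the exterior power of `e_i ↦ e_{f i}`). -/
def fstar (n m : ℕ) (f : Fin n → Fin m) : EA n →ₗ[ℂ] EA m :=
  (ExteriorAlgebra.map (pushLin n m f)).toLinearMap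

/-- The Young subgroup `𝔖_f ≤ 𝔖_n` of permutations preserving every fiber of `f`. -/
def youngSubgroup (n m : ℕ) (f : Fin n → Fin m) : Subgroup (Equiv.Perm (Fin n)) where
  carrier := {σ | ∀ i, f (σ i) = f i}
  one_mem' := fun _ => rfl
  mul_mem' := by
    intro a b ha hb i
    have h : (a * b) i = a (b i) := rfl
    rw [h, ha (b i), hb i]
  inv_mem' := by
    intro a ha i
    have h := ha (a⁻¹ i)
    rw [show a (a⁻¹ i) = i from a.apply_symm_apply i] at h
    exact h.symm

/-- The special flat `F_f`: the intersection (inside `W_{n,l}`) of the hyperplanes `H_α`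
over all `(l+1)`-subsets `α` with `|f(α)| ≤ l`. -/
def specialFlat (n m l : ℕ) (f : Fin n → Fin m) : Submodule ℂ (EA n) :=
  Wsub n l ⊓ ⨅ (α : Finset (Fin n)) (hα : α.card = l + 1) (_ : (α.image f).card ≤ l),
    Hplane n l α hα

/-- The fixed subspace `W_{n,l}^{𝔖_f} = {v ∈ W_{n,l} : σ·v = v for all σ ∈ 𝔖_f}`. -/
def fixedW (n m l : ℕ) (f : Fin n → Fin m) : Submodule ℂ (EA n) :=
  Wsub n l ⊓ ⨅ (σ : Equiv.Perm (Fin n)) (_ : σ ∈ youngSubgroup n m f),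
    LinearMap.ker (permMap n σ - LinearMap.id)

/-- The sections of `f : {1,…,n} → {1,…,m}`: maps `g` with `f ∘ g = id`. -/
abbrev sections (n m : ℕ) (f : Fin n → Fin m) := {g : Fin m → Fin n // f ∘ g = id}

/-- The averaging map `φ_f = (1/n_f) Σ_g g_*`, over all sections `g` of `f`. -/
def phiMap (n m : ℕ) (f : Fin n → Fin m) : EA m →ₗ[ℂ] EA n :=
  letI : Fintype (sections n m f) := Fintype.ofFinite _
  (Nat.card (sections n m f) : ℂ)⁻¹ •
    ∑ g : sections n m f, (ExteriorAlgebra.map (pushLin m n g.1)).toLinearMap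

/-- A flat of the intrinsic arrangement `A_n`: an intersection of a set of hyperplanes `H_α`
(inside the ambient space `W_{n,l}` of the arrangement). -/
def IsFlat (n l : ℕ) (U : Submodule ℂ (EA n)) : Prop :=
  ∃ S : Set {α : Finset (Fin n) // α.card = l + 1},
    U = Wsub n l ⊓ ⨅ a ∈ S, Hplane n l a.1 a.2

/-- The set of lines (one-dimensional flats) of the arrangement `A_n`. -/
def lines (n l : ℕ) : Set (Submodule ℂ (EA n)) :=
  {U | IsFlat n l U ∧ Module.finrank ℂ ↥U = 1}

/-- A flat is stable if it is contained in a special flat `F_f` for some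
surjection `f : {1,…,n} → {1,…,m}` with `m < n`. -/
def IsStable (n l : ℕ) (U : Submodule ℂ (EA n)) : Prop :=
  ∃ (m : ℕ) (f : Fin n → Fin m), Function.Surjective f ∧ m < n ∧ U ≤ specialFlat n m l f

/-- The Stirling number of the second kind `S(n,k)`: the number of partitions of
`{1,…,n}` into `k` nonempty blocks. -/
def stirling (n k : ℕ) : ℕ :=
  Nat.card {P : Finpartition (Finset.univ : Finset (Fin n)) // P.parts.card = k}

section AuxLemmas

open ExteriorAlgebra

variable {n : ℕ}

lemma evec_apply (b k : Fin n) : evec n b k = if k = b then 1 else 0 := Pi.single_apply b 1 k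

lemma stdInner_eq (u x : Fin n → ℂ) : stdInner n u x = ∑ k, x k * (starRingEnd ℂ) (u k) := rfl

lemma stdInner_evec (b : Fin n) (x : Fin n → ℂ) : stdInner n (evec n b) x = x b := by
  rw [stdInner_eq, Finset.sum_eq_single b]
  · simp [evec_apply]
  · intro k _ hk
    simp [evec_apply, hk]
  · simp

lemma stdInner_evec_sub (a b : Fin n) (x : Fin n → ℂ) :
    stdInner n (evec n a - evec n b) x = x a - x b := by
  have : ∀ k, x k * (starRingEnd ℂ) ((evec n a - evec n b) k)
      = x k * (starRingEnd ℂ) (evec n a k) - x k * (starRingEnd ℂ) (evec n b k) := by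
    intro k; simp [mul_sub]
  rw [stdInner_eq]
  simp_rw [this]
  rw [Finset.sum_sub_distrib]
  rw [show ∑ k, x k * (starRingEnd ℂ) (evec n a k) = stdInner n (evec n a) x from rfl]
  rw [show ∑ k, x k * (starRingEnd ℂ) (evec n b k) = stdInner n (evec n b) x from rfl]
  rw [stdInner_evec, stdInner_evec]

lemma sumLin_evec (b : Fin n) : sumLin n (evec n b) = 1 := by
  show ∑ k, evec n b k = 1
  simp [evec, Finset.sum_pi_single']

lemma pairFun_ιMulti (l : ℕ) (u v : Fin l → (Fin n → ℂ)) :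
    pairFun n l u (ιMulti ℂ l v) = (Matrix.of fun t s => stdInner n (u s) (v t)).det := by
  rw [pairFun, liftAlternating_apply_ιMulti, dif_pos rfl]
  rfl

lemma mem_Wsub (l : ℕ) (v : Fin l → (Fin n → ℂ)) (h : ∀ t, v t ∈ stdRep n) :
    ιMulti ℂ l v ∈ Wsub n l := by
  refine ⟨ιMulti ℂ l (fun t => (⟨v t, h t⟩ : stdRep n)), ?_, ?_⟩
  · exact ιMulti_range ℂ l (Set.mem_range_self _)
  · show ExteriorAlgebra.map _ _ = _
    rw [map_apply_ιMulti]
    rfl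

lemma permMap_ιMulti (σ : Equiv.Perm (Fin n)) (l : ℕ) (v : Fin l → (Fin n → ℂ)) :
    permMap n σ (ιMulti ℂ l v) = ιMulti ℂ l (fun t => v t ∘ ⇑σ⁻¹) := by
  show ExteriorAlgebra.map _ _ = _
  rw [map_apply_ιMulti]
  rfl

lemma evec_comp (σ : Equiv.Perm (Fin n)) (k : Fin n) : evec n k ∘ ⇑σ = evec n (σ.symm k) := by
  funext m
  simp only [Function.comp_apply, evec_apply, Equiv.apply_eq_iff_eq_symm_apply]

lemma span_expansion (l : ℕ) {ι : Type} [Fintype ι] [DecidableEq ι] (c : ι → (Fin n → ℂ))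
    (v : Fin l → (Fin n → ℂ)) (h : ∀ t, v t ∈ Submodule.span ℂ (Set.range c)) :
    ιMulti ℂ l v ∈ Submodule.span ℂ
      {x : EA n | ∃ κ : Fin l → ι, Function.Injective κ ∧ x = ιMulti ℂ l (c ∘ κ)} := by
  choose a ha using fun t => (Submodule.mem_span_range_iff_exists_fun ℂ).mp (h t)
  have hv : v = fun t => ∑ k : ι, a t k • c k := by
    funext t
    exact (ha t).symm
  rw [hv]
  have hms := (ιMulti ℂ l (M := Fin n → ℂ)).toMultilinearMap.map_sum
    (g := fun t (k : ι) => a t k • c k)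
  rw [show ((ιMulti ℂ l) fun t => ∑ k : ι, a t k • c k)
      = (ιMulti ℂ l (M := Fin n → ℂ)).toMultilinearMap fun t => ∑ k : ι, a t k • c k from rfl,
    hms]
  apply Submodule.sum_mem
  intro κ _
  have hsm := (ιMulti ℂ l (M := Fin n → ℂ)).toMultilinearMap.map_smul_univ
    (fun t => a t (κ t)) (fun t => c (κ t))
  rw [show ((ιMulti ℂ l (M := Fin n → ℂ)).toMultilinearMap fun t => a t (κ t) • c (κ t))
      = (ιMulti ℂ l (M := Fin n → ℂ)) fun t => a t (κ t) • c (κ t) from rfl] at hsm ⊢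
  rw [hsm]
  by_cases hκ : Function.Injective κ
  · exact Submodule.smul_mem _ _ (Submodule.subset_span ⟨κ, hκ, rfl⟩)
  · obtain ⟨t, t', heq, hne⟩ := Function.not_injective_iff.mp hκ
    have hz : (ιMulti ℂ l) (c ∘ κ) = (0 : EA n) :=
      AlternatingMap.map_eq_zero_of_eq _ (c ∘ κ) (congrArg c heq) hne
    have hfin : ((∏ i : Fin l, a i (κ i)) • (ιMulti ℂ l) (c ∘ κ) : EA n) ∈ Submodule.span ℂ
        {x : EA n | ∃ κ : Fin l → ι, Function.Injective κ ∧ x = ιMulti ℂ l (c ∘ κ)} := by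
      rw [hz, smul_zero]
      exact Submodule.zero_mem _
    exact hfin

lemma span_single (l : ℕ) (u v : Fin l → (Fin n → ℂ))
    (h : ∀ t, v t ∈ Submodule.span ℂ (Set.range u)) :
    ιMulti ℂ l v ∈ Submodule.span ℂ {ιMulti ℂ l u} := by
  have h1 := span_expansion l u v h
  refine Submodule.span_le.mpr ?_ h1
  rintro x ⟨κ, hκ, rfl⟩
  let σ : Equiv.Perm (Fin l) := Equiv.ofBijective κ (Finite.injective_iff_bijective.mp hκ)
  have hco : u ∘ κ = u ∘ ⇑σ := by
    funext t
    show u (κ t) = u (σ t)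
    rw [Equiv.ofBijective_apply]
  rw [hco, AlternatingMap.map_perm]
  rcases Int.units_eq_one_or (Equiv.Perm.sign σ) with hs | hs <;> rw [hs]
  · rw [one_smul]
    exact Submodule.subset_span rfl
  · rw [Units.smul_def, Units.val_neg, Units.val_one, neg_one_zsmul]
    exact Submodule.neg_mem _ (Submodule.subset_span rfl)

lemma linearIndependent_of_dual {ι : Type} (b : ι → EA n) (φ : ι → (EA n →ₗ[ℂ] ℂ))
    (hd : ∀ i, φ i (b i) ≠ 0) (ho : ∀ i j, i ≠ j → φ i (b j) = 0) :
    LinearIndependent ℂ b := by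
  rw [linearIndependent_iff']
  intro s g hsum idx hidx
  have h1 := congrArg (φ idx) hsum
  rw [map_sum, map_zero] at h1
  rw [Finset.sum_eq_single idx] at h1
  · rw [map_smul] at h1
    exact (smul_eq_zero.mp h1).resolve_right (hd idx)
  · intro k _ hk
    rw [map_smul, ho idx k (Ne.symm hk), smul_zero]
  · intro h
    exact absurd hidx h

end AuxLemmas
section AuxFamilies

open ExteriorAlgebra

variable {n : ℕ}

/-- midpoint vector `(e_i + e_j)/2`. -/
def midv (n : ℕ) (i j : Fin n) : Fin n → ℂ := (2⁻¹ : ℂ) • (evec n i + evec n j)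

/-- dual wedge family: pure coordinate vectors of a set `T`. -/
def dvecs (n l : ℕ) (T : Finset (Fin n)) (hT : T.card = l) : Fin l → (Fin n → ℂ) :=
  fun t => evec n ((T.orderIsoOfFin hT t) : Fin n)

def Gvecs (n l : ℕ) (z : Fin n) (S : Finset (Fin n)) (hS : S.card = l) : Fin l → (Fin n → ℂ) :=
  fun t => evec n ((S.orderIsoOfFin hS t) : Fin n) - evec n z

def gvecs (n l : ℕ) (i j : Fin n) (S : Finset (Fin n)) (hS : S.card = l) :
    Fin l → (Fin n → ℂ) :=
  fun t => evec n ((S.orderIsoOfFin hS t) : Fin n) - midv n i j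

def hvecs (n l' : ℕ) (i j : Fin n) (β : Finset (Fin n)) (hβ : β.card = l') :
    Fin (l' + 1) → (Fin n → ℂ) :=
  Fin.cons (evec n i - evec n j) (fun t => evec n ((β.orderIsoOfFin hβ t) : Fin n) - midv n i j)

def hdvecs (n l' : ℕ) (i j : Fin n) (β : Finset (Fin n)) (hβ : β.card = l') :
    Fin (l' + 1) → (Fin n → ℂ) :=
  Fin.cons (evec n i - evec n j) (dvecs n l' β hβ)

lemma midv_apply (i j b : Fin n) :
    midv n i j b = 2⁻¹ * ((if b = i then 1 else 0) + (if b = j then 1 else 0)) := by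
  simp [midv, evec_apply]

lemma midv_eq_zero {i j b : Fin n} (hbi : b ≠ i) (hbj : b ≠ j) : midv n i j b = 0 := by
  rw [midv_apply, if_neg hbi, if_neg hbj]
  norm_num

lemma orderIso_coe_inj {l : ℕ} (S : Finset (Fin n)) (hS : S.card = l) (t s : Fin l) :
    ((S.orderIsoOfFin hS t : Fin n) = (S.orderIsoOfFin hS s : Fin n)) ↔ t = s := by
  constructor
  · intro h
    exact (S.orderIsoOfFin hS).injective (Subtype.coe_injective h)
  · intro h
    rw [h]

lemma orderIso_coe_mem {l : ℕ} (S : Finset (Fin n)) (hS : S.card = l) (t : Fin l) :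
    ((S.orderIsoOfFin hS t : Fin n)) ∈ S := (S.orderIsoOfFin hS t).2

lemma pair_diag (l : ℕ) (S T : Finset (Fin n)) (hS : S.card = l) (hT : T.card = l)
    (y : Fin n → ℂ) (hy : ∀ b ∈ T, y b = 0) :
    pairFun n l (dvecs n l T hT)
        (ιMulti ℂ l (fun t => evec n ((S.orderIsoOfFin hS t) : Fin n) - y))
      = if S = T then 1 else 0 := by
  rw [pairFun_ιMulti]
  have hentry : ∀ t s, stdInner n (dvecs n l T hT s)
      (evec n ((S.orderIsoOfFin hS t) : Fin n) - y)
      = if ((S.orderIsoOfFin hS t) : Fin n) = ((T.orderIsoOfFin hT s) : Fin n) then 1 else 0 := by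
    intro t s
    rw [show stdInner n (dvecs n l T hT s) (evec n ((S.orderIsoOfFin hS t) : Fin n) - y)
        = (evec n ((S.orderIsoOfFin hS t) : Fin n) - y) ((T.orderIsoOfFin hT s : Fin n))
        from stdInner_evec _ _]
    rw [Pi.sub_apply, hy _ (orderIso_coe_mem T hT s), evec_apply, sub_zero]
    exact if_congr eq_comm rfl rfl
  by_cases hST : S = T
  · subst hST
    rw [if_pos rfl]
    have hm : (Matrix.of fun t s => stdInner n (dvecs n l S hT s)
        (evec n ((S.orderIsoOfFin hS t) : Fin n) - y)) = (1 : Matrix (Fin l) (Fin l) ℂ) := by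
      ext t s
      rw [Matrix.of_apply, hentry t s, Matrix.one_apply]
      by_cases hts : t = s
      · subst hts
        simp
      · rw [if_neg hts, if_neg]
        intro hcc
        exact hts ((orderIso_coe_inj S hS t s).mp hcc)
    rw [hm, Matrix.det_one]
  · rw [if_neg hST]
    have hTS : ¬ T ⊆ S := by
      intro hsub
      exact hST (Finset.eq_of_subset_of_card_le hsub (by rw [hS, hT])).symm
    obtain ⟨b, hbT, hbS⟩ := Finset.not_subset.mp hTS
    apply Matrix.det_eq_zero_of_column_eq_zero ((T.orderIsoOfFin hT).symm ⟨b, hbT⟩)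
    intro t
    rw [Matrix.of_apply, hentry, if_neg]
    intro hcc
    have hco : ((T.orderIsoOfFin hT ((T.orderIsoOfFin hT).symm ⟨b, hbT⟩) : Fin n)) = b := by
      rw [OrderIso.apply_symm_apply]
    rw [hco] at hcc
    exact hbS (hcc ▸ orderIso_coe_mem S hS t)

end AuxFamilies
section AuxPairings

open ExteriorAlgebra

variable {n : ℕ}

lemma pair_G (l : ℕ) (z : Fin n) (S T : Finset (Fin n)) (hS : S.card = l) (hT : T.card = l)
    (hzT : z ∉ T) :
    pairFun n l (dvecs n l T hT) (ιMulti ℂ l (Gvecs n l z S hS)) = if S = T then 1 else 0 := by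
  have := pair_diag l S T hS hT (evec n z) (fun b hb => by
    rw [evec_apply, if_neg]
    intro hbz
    exact hzT (hbz ▸ hb))
  exact this

lemma pair_g (l : ℕ) (i j : Fin n) (S T : Finset (Fin n)) (hS : S.card = l) (hT : T.card = l)
    (hiT : i ∉ T) (hjT : j ∉ T) :
    pairFun n l (dvecs n l T hT) (ιMulti ℂ l (gvecs n l i j S hS)) = if S = T then 1 else 0 := by
  have := pair_diag l S T hS hT (midv n i j) (fun b hb =>
    midv_eq_zero (fun hbi => hiT (hbi ▸ hb)) (fun hbj => hjT (hbj ▸ hb)))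
  exact this

lemma pair_h (l' : ℕ) (i j : Fin n) (hij : i ≠ j) (β γ : Finset (Fin n))
    (hβ : β.card = l') (hγ : γ.card = l')
    (hiβ : i ∉ β) (hjβ : j ∉ β) (hiγ : i ∉ γ) (hjγ : j ∉ γ) :
    pairFun n (l' + 1) (hdvecs n l' i j β hβ) (ιMulti ℂ (l' + 1) (hvecs n l' i j γ hγ))
      = if γ = β then 2 else 0 := by
  rw [pairFun_ιMulti]
  have hE00 : stdInner n (hdvecs n l' i j β hβ 0) (hvecs n l' i j γ hγ 0) = 2 := by
    show stdInner n (evec n i - evec n j) (evec n i - evec n j) = 2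
    rw [stdInner_evec_sub, Pi.sub_apply, Pi.sub_apply, evec_apply, evec_apply, evec_apply,
      evec_apply, if_pos rfl, if_pos rfl, if_neg hij.symm, if_neg hij]
    norm_num
  have hEt0 : ∀ t' : Fin l',
      stdInner n (hdvecs n l' i j β hβ 0) (hvecs n l' i j γ hγ t'.succ) = 0 := by
    intro t'
    show stdInner n (evec n i - evec n j)
      (evec n ((γ.orderIsoOfFin hγ t' : Fin n)) - midv n i j) = 0
    have h1 : i ≠ (γ.orderIsoOfFin hγ t' : Fin n) := fun hc =>
      hiγ (hc ▸ orderIso_coe_mem γ hγ t')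
    have h2 : j ≠ (γ.orderIsoOfFin hγ t' : Fin n) := fun hc =>
      hjγ (hc ▸ orderIso_coe_mem γ hγ t')
    rw [stdInner_evec_sub, Pi.sub_apply, Pi.sub_apply, evec_apply, evec_apply,
      if_neg h1, if_neg h2, midv_apply, midv_apply, if_pos rfl, if_pos rfl,
      if_neg hij.symm, if_neg hij]
    norm_num
  have hE0s : ∀ s' : Fin l',
      stdInner n (hdvecs n l' i j β hβ s'.succ) (hvecs n l' i j γ hγ 0) = 0 := by
    intro s'
    show stdInner n (dvecs n l' β hβ s') (evec n i - evec n j) = 0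
    have h1 : i ≠ (β.orderIsoOfFin hβ s' : Fin n) := fun hc =>
      hiβ (hc ▸ orderIso_coe_mem β hβ s')
    have h2 : j ≠ (β.orderIsoOfFin hβ s' : Fin n) := fun hc =>
      hjβ (hc ▸ orderIso_coe_mem β hβ s')
    rw [show stdInner n (dvecs n l' β hβ s') (evec n i - evec n j)
        = (evec n i - evec n j) ((β.orderIsoOfFin hβ s' : Fin n)) from stdInner_evec _ _,
      Pi.sub_apply, evec_apply, evec_apply, if_neg (Ne.symm h1), if_neg (Ne.symm h2)]
    norm_num
  have hEts : ∀ (t' s' : Fin l'),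
      stdInner n (hdvecs n l' i j β hβ s'.succ) (hvecs n l' i j γ hγ t'.succ)
        = if ((β.orderIsoOfFin hβ s' : Fin n) = (γ.orderIsoOfFin hγ t' : Fin n)) then 1
          else 0 := by
    intro t' s'
    have h1 : (β.orderIsoOfFin hβ s' : Fin n) ≠ i := fun hc =>
      hiβ (hc ▸ orderIso_coe_mem β hβ s')
    have h2 : (β.orderIsoOfFin hβ s' : Fin n) ≠ j := fun hc =>
      hjβ (hc ▸ orderIso_coe_mem β hβ s')
    rw [show stdInner n (hdvecs n l' i j β hβ s'.succ) (hvecs n l' i j γ hγ t'.succ)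
        = (evec n ((γ.orderIsoOfFin hγ t' : Fin n)) - midv n i j)
            ((β.orderIsoOfFin hβ s' : Fin n)) from stdInner_evec _ _,
      Pi.sub_apply, evec_apply, midv_eq_zero h1 h2, sub_zero]
  by_cases hγβ : γ = β
  · subst hγβ
    rw [if_pos rfl]
    have hm : (Matrix.of fun t s => stdInner n (hdvecs n l' i j γ hβ s)
        (hvecs n l' i j γ hγ t))
        = Matrix.diagonal (Fin.cons 2 (fun _ => 1)) := by
      ext t s
      rw [Matrix.of_apply]
      refine Fin.cases ?_ (fun t' => ?_) t <;> refine Fin.cases ?_ (fun s' => ?_) s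
      · rw [hE00, Matrix.diagonal_apply_eq, Fin.cons_zero]
      · rw [hE0s, Matrix.diagonal_apply_ne _ (Fin.succ_ne_zero s').symm]
      · rw [hEt0, Matrix.diagonal_apply_ne _ (Fin.succ_ne_zero t')]
      · rw [hEts]
        by_cases hts : t' = s'
        · subst hts
          rw [if_pos rfl, Matrix.diagonal_apply_eq, Fin.cons_succ]
        · rw [if_neg, Matrix.diagonal_apply_ne]
          · exact fun hc => hts (Fin.succ_injective _ hc)
          · intro hcc
            exact hts ((orderIso_coe_inj γ hβ s' t').mp hcc).symm
    rw [hm, Matrix.det_diagonal, Fin.prod_cons]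
    simp
  · rw [if_neg hγβ]
    have hβγ : ¬ β ⊆ γ := by
      intro hsub
      exact hγβ (Finset.eq_of_subset_of_card_le hsub (by rw [hβ, hγ])).symm
    obtain ⟨b, hbβ, hbγ⟩ := Finset.not_subset.mp hβγ
    set s₀ : Fin l' := (β.orderIsoOfFin hβ).symm ⟨b, hbβ⟩ with hs₀
    have hcoe : (β.orderIsoOfFin hβ s₀ : Fin n) = b := by
      rw [hs₀, OrderIso.apply_symm_apply]
    have hbi : b ≠ i := fun hc => hiβ (hc ▸ hbβ)
    have hbj : b ≠ j := fun hc => hjβ (hc ▸ hbβ)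
    apply Matrix.det_eq_zero_of_column_eq_zero s₀.succ
    intro t
    rw [Matrix.of_apply]
    refine Fin.cases ?_ (fun t' => ?_) t
    · rw [hE0s]
    · rw [hEts, hcoe, if_neg]
      intro hcc
      exact hbγ (hcc ▸ orderIso_coe_mem γ hγ t')

end AuxPairings
section AuxMem

open ExteriorAlgebra

variable {n : ℕ}

lemma mem_stdRep_sub_evec (a b : Fin n) : evec n a - evec n b ∈ stdRep n := by
  show sumLin n _ = 0
  rw [map_sub, sumLin_evec, sumLin_evec, sub_self]

lemma sumLin_midv (i j : Fin n) : sumLin n (midv n i j) = 1 := by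
  rw [midv, map_smul, map_add, sumLin_evec, sumLin_evec]
  norm_num

lemma mem_stdRep_sub_midv (c i j : Fin n) : evec n c - midv n i j ∈ stdRep n := by
  show sumLin n _ = 0
  rw [map_sub, sumLin_evec, sumLin_midv, sub_self]

lemma hvecs_mem_Wsub (l' : ℕ) (i j : Fin n) (β : Finset (Fin n)) (hβ : β.card = l') :
    ιMulti ℂ (l' + 1) (hvecs n l' i j β hβ) ∈ Wsub n (l' + 1) := by
  apply mem_Wsub
  intro t
  refine Fin.cases ?_ (fun t' => ?_) t
  · exact mem_stdRep_sub_evec i j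
  · exact mem_stdRep_sub_midv _ i j

lemma gvecs_mem_Wsub (l : ℕ) (i j : Fin n) (S : Finset (Fin n)) (hS : S.card = l) :
    ιMulti ℂ l (gvecs n l i j S hS) ∈ Wsub n l := by
  apply mem_Wsub
  intro t
  exact mem_stdRep_sub_midv _ i j

lemma Gvecs_mem_Wsub (l : ℕ) (z : Fin n) (S : Finset (Fin n)) (hS : S.card = l) :
    ιMulti ℂ l (Gvecs n l z S hS) ∈ Wsub n l := by
  apply mem_Wsub
  intro t
  exact mem_stdRep_sub_evec _ z

lemma evec_comp_swap_of_ne {i j : Fin n} (c : Fin n) (hci : c ≠ i) (hcj : c ≠ j) :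
    evec n c ∘ ⇑(Equiv.swap i j) = evec n c := by
  rw [evec_comp, Equiv.symm_swap, Equiv.swap_apply_of_ne_of_ne hci hcj]

lemma midv_comp_swap (i j : Fin n) : midv n i j ∘ ⇑(Equiv.swap i j) = midv n i j := by
  rw [show midv n i j ∘ ⇑(Equiv.swap i j)
      = (2⁻¹ : ℂ) • (evec n i ∘ ⇑(Equiv.swap i j) + evec n j ∘ ⇑(Equiv.swap i j)) from rfl]
  rw [evec_comp, evec_comp, Equiv.symm_swap, Equiv.swap_apply_left,
    Equiv.swap_apply_right, midv, add_comm]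

lemma perm_hvecs (l' : ℕ) (i j : Fin n) (β : Finset (Fin n)) (hβ : β.card = l')
    (hiβ : i ∉ β) (hjβ : j ∉ β) :
    permMap n (Equiv.swap i j) (ιMulti ℂ (l' + 1) (hvecs n l' i j β hβ))
      = -(ιMulti ℂ (l' + 1) (hvecs n l' i j β hβ)) := by
  rw [permMap_ιMulti]
  have hfam : (fun t => hvecs n l' i j β hβ t ∘ ⇑(Equiv.swap i j)⁻¹)
      = Function.update (hvecs n l' i j β hβ) 0 (-(hvecs n l' i j β hβ 0)) := by
    funext t
    refine Fin.cases ?_ (fun t' => ?_) t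
    · rw [Function.update_self]
      rw [show hvecs n l' i j β hβ 0 = evec n i - evec n j from rfl]
      rw [show (evec n i - evec n j) ∘ ⇑(Equiv.swap i j)⁻¹
          = evec n i ∘ ⇑(Equiv.swap i j)⁻¹ - evec n j ∘ ⇑(Equiv.swap i j)⁻¹ from rfl]
      rw [Equiv.swap_inv, evec_comp, evec_comp, Equiv.symm_swap, Equiv.swap_apply_left,
        Equiv.swap_apply_right, neg_sub]
    · rw [Function.update_of_ne (Fin.succ_ne_zero t')]
      rw [show hvecs n l' i j β hβ t'.succ
          = evec n ((β.orderIsoOfFin hβ t' : Fin n)) - midv n i j from rfl]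
      have hci : (β.orderIsoOfFin hβ t' : Fin n) ≠ i := fun hc =>
        hiβ (hc ▸ orderIso_coe_mem β hβ t')
      have hcj : (β.orderIsoOfFin hβ t' : Fin n) ≠ j := fun hc =>
        hjβ (hc ▸ orderIso_coe_mem β hβ t')
      rw [show (evec n ((β.orderIsoOfFin hβ t' : Fin n)) - midv n i j) ∘ ⇑(Equiv.swap i j)⁻¹
          = evec n ((β.orderIsoOfFin hβ t' : Fin n)) ∘ ⇑(Equiv.swap i j)⁻¹
            - midv n i j ∘ ⇑(Equiv.swap i j)⁻¹ from rfl]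
      rw [Equiv.swap_inv, evec_comp_swap_of_ne _ hci hcj, midv_comp_swap]
  rw [hfam]
  have h2 := (ιMulti ℂ (l' + 1) (M := Fin n → ℂ)).toMultilinearMap.map_update_neg
    (hvecs n l' i j β hβ) 0 (hvecs n l' i j β hβ 0)
  rw [Function.update_eq_self] at h2
  exact h2

lemma perm_gvecs (l : ℕ) (i j : Fin n) (S : Finset (Fin n)) (hS : S.card = l)
    (hiS : i ∉ S) (hjS : j ∉ S) :
    permMap n (Equiv.swap i j) (ιMulti ℂ l (gvecs n l i j S hS))
      = ιMulti ℂ l (gvecs n l i j S hS) := by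
  rw [permMap_ιMulti]
  congr 1
  funext t
  have hci : (S.orderIsoOfFin hS t : Fin n) ≠ i := fun hc =>
    hiS (hc ▸ orderIso_coe_mem S hS t)
  have hcj : (S.orderIsoOfFin hS t : Fin n) ≠ j := fun hc =>
    hjS (hc ▸ orderIso_coe_mem S hS t)
  rw [show gvecs n l i j S hS t ∘ ⇑(Equiv.swap i j)⁻¹
      = evec n ((S.orderIsoOfFin hS t : Fin n)) ∘ ⇑(Equiv.swap i j)⁻¹
        - midv n i j ∘ ⇑(Equiv.swap i j)⁻¹ from rfl]
  rw [Equiv.swap_inv, evec_comp_swap_of_ne _ hci hcj, midv_comp_swap]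
  rfl

end AuxMem
section AuxSpan

open ExteriorAlgebra

variable {n : ℕ}

lemma coe_mem_span_uvecs (l : ℕ) (α : Finset (Fin n)) (hα : α.card = l + 1)
    {c : Fin n} (hc : c ∈ α) :
    evec n c - evec n ((α.orderIsoOfFin hα 0 : Fin n))
      ∈ Submodule.span ℂ (Set.range (uvecs n l α hα)) := by
  set r : Fin (l + 1) := (α.orderIsoOfFin hα).symm ⟨c, hc⟩ with hr
  have hcoe : (α.orderIsoOfFin hα r : Fin n) = c := by
    rw [hr, OrderIso.apply_symm_apply]
  rcases Fin.eq_zero_or_eq_succ r with h0 | ⟨r', hr'⟩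
  · rw [← hcoe, h0, sub_self]
    exact Submodule.zero_mem _
  · rw [← hcoe, hr']
    exact Submodule.subset_span ⟨r', rfl⟩

lemma wvec_mem_span_h (l' : ℕ) (i j : Fin n) (α : Finset (Fin n))
    (hα : α.card = l' + 1 + 1) (hiα : i ∈ α) (hjα : j ∈ α)
    (hβ : ((α.erase i).erase j).card = l') :
    wvec n (l' + 1) α hα ∈ Submodule.span ℂ
      {ιMulti ℂ (l' + 1) (hvecs n l' i j ((α.erase i).erase j) hβ)} := by
  set β := (α.erase i).erase j with hβdef
  apply span_single
  intro t
  have hmem : ∀ c ∈ α, evec n c - midv n i j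
      ∈ Submodule.span ℂ (Set.range (hvecs n l' i j β hβ)) := by
    intro c hc
    by_cases hci : c = i
    · subst hci
      have heq : evec n c - midv n c j = (2⁻¹ : ℂ) • (evec n c - evec n j) := by
        funext k
        simp [midv, evec_apply]
        split_ifs <;> norm_num
      rw [heq]
      exact Submodule.smul_mem _ _ (Submodule.subset_span ⟨0, rfl⟩)
    · by_cases hcj : c = j
      · subst hcj
        have heq : evec n c - midv n i c = (-2⁻¹ : ℂ) • (evec n i - evec n c) := by
          funext k
          simp [midv, evec_apply]
          split_ifs <;> norm_num
        rw [heq]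
        exact Submodule.smul_mem _ _ (Submodule.subset_span ⟨0, rfl⟩)
      · have hcβ : c ∈ β := by
          rw [hβdef]
          exact Finset.mem_erase.mpr ⟨hcj, Finset.mem_erase.mpr ⟨hci, hc⟩⟩
        set r : Fin l' := (β.orderIsoOfFin hβ).symm ⟨c, hcβ⟩ with hr
        have hcoe : (β.orderIsoOfFin hβ r : Fin n) = c := by
          rw [hr, OrderIso.apply_symm_apply]
        refine Submodule.subset_span ⟨r.succ, ?_⟩
        rw [show hvecs n l' i j β hβ r.succ
            = evec n ((β.orderIsoOfFin hβ r : Fin n)) - midv n i j from rfl, hcoe]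
  have huv : uvecs n (l' + 1) α hα t
      = (evec n ((α.orderIsoOfFin hα t.succ : Fin n)) - midv n i j)
        - (evec n ((α.orderIsoOfFin hα 0 : Fin n)) - midv n i j) := by
    rw [sub_sub_sub_cancel_right]
    rfl
  rw [huv]
  exact Submodule.sub_mem _ (hmem _ (orderIso_coe_mem α hα t.succ))
    (hmem _ (orderIso_coe_mem α hα 0))

lemma h_mem_span_w (l' : ℕ) (i j : Fin n) (hij : i ≠ j) (β : Finset (Fin n))
    (hβ : β.card = l') (hiβ : i ∉ β) (hjβ : j ∉ β)
    (hα : (insert i (insert j β)).card = l' + 1 + 1) :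
    ιMulti ℂ (l' + 1) (hvecs n l' i j β hβ) ∈ Submodule.span ℂ
      {wvec n (l' + 1) (insert i (insert j β)) hα} := by
  set α := insert i (insert j β) with hαdef
  rw [show wvec n (l' + 1) α hα = ιMulti ℂ (l' + 1) (uvecs n (l' + 1) α hα) from rfl]
  apply span_single
  intro t
  have hiα : i ∈ α := Finset.mem_insert_self _ _
  have hjα : j ∈ α := Finset.mem_insert_of_mem (Finset.mem_insert_self _ _)
  refine Fin.cases ?_ (fun t' => ?_) t
  · have heq : hvecs n l' i j β hβ 0
        = (evec n i - evec n ((α.orderIsoOfFin hα 0 : Fin n)))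
          - (evec n j - evec n ((α.orderIsoOfFin hα 0 : Fin n))) := by
      rw [sub_sub_sub_cancel_right]
      rfl
    rw [heq]
    exact Submodule.sub_mem _ (coe_mem_span_uvecs _ α hα hiα) (coe_mem_span_uvecs _ α hα hjα)
  · have hcα : ((β.orderIsoOfFin hβ t' : Fin n)) ∈ α := by
      rw [hαdef]
      exact Finset.mem_insert_of_mem (Finset.mem_insert_of_mem (orderIso_coe_mem β hβ t'))
    have heq : hvecs n l' i j β hβ t'.succ
        = (evec n ((β.orderIsoOfFin hβ t' : Fin n))
            - evec n ((α.orderIsoOfFin hα 0 : Fin n)))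
          - (2⁻¹ : ℂ) • ((evec n i - evec n ((α.orderIsoOfFin hα 0 : Fin n)))
            + (evec n j - evec n ((α.orderIsoOfFin hα 0 : Fin n)))) := by
      rw [show hvecs n l' i j β hβ t'.succ
          = evec n ((β.orderIsoOfFin hβ t' : Fin n)) - midv n i j from rfl]
      funext k
      simp [midv, evec_apply]
      split_ifs <;> norm_num
    rw [heq]
    exact Submodule.sub_mem _ (coe_mem_span_uvecs _ α hα hcα)
      (Submodule.smul_mem _ _ (Submodule.add_mem _ (coe_mem_span_uvecs _ α hα hiα)
        (coe_mem_span_uvecs _ α hα hjα)))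

end AuxSpan
section AuxSpanW

open ExteriorAlgebra

variable {n : ℕ}

lemma stdRep_mem_span_c (z : Fin n) (x : Fin n → ℂ) (hx : x ∈ stdRep n) :
    x ∈ Submodule.span ℂ
      (Set.range (fun k : ↥(Finset.univ.erase z) => evec n (k : Fin n) - evec n z)) := by
  rw [Submodule.mem_span_range_iff_exists_fun]
  refine ⟨fun k => x (k : Fin n), ?_⟩
  have hsum : (∑ k, x k) = 0 := hx
  rw [Finset.sum_coe_sort (Finset.univ.erase z)
    (fun k => x k • (evec n k - evec n z))]
  funext m
  rw [Finset.sum_apply]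
  by_cases hmz : m = z
  · subst hmz
    have hterm : ∀ k ∈ Finset.univ.erase m, (x k • (evec n k - evec n m)) m = -x k := by
      intro k hk
      have hkm : k ≠ m := (Finset.mem_erase.mp hk).1
      rw [Pi.smul_apply, Pi.sub_apply, evec_apply, evec_apply, if_pos rfl,
        if_neg (Ne.symm hkm)]
      simp
    rw [Finset.sum_congr rfl hterm, Finset.sum_neg_distrib]
    have := Finset.add_sum_erase Finset.univ x (Finset.mem_univ m)
    rw [hsum] at this
    have h2 : ∑ k ∈ Finset.univ.erase m, x k = -x m :=
      eq_neg_of_add_eq_zero_right this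
    rw [h2, neg_neg]
  · have hterm : ∀ k ∈ Finset.univ.erase z, (x k • (evec n k - evec n z)) m
        = if k = m then x k else 0 := by
      intro k hk
      rw [Pi.smul_apply, Pi.sub_apply, evec_apply, evec_apply, if_neg hmz]
      by_cases hkm : k = m
      · rw [if_pos hkm, if_pos hkm.symm]
        simp
      · rw [if_neg (fun h => hkm h.symm), if_neg hkm]
        simp
    rw [Finset.sum_congr rfl hterm, Finset.sum_ite_eq' (Finset.univ.erase z) m x,
      if_pos (Finset.mem_erase.mpr ⟨hmz, Finset.mem_univ m⟩)]

lemma ιMulti_mem_span_G (l : ℕ) (z : Fin n) (v : Fin l → (Fin n → ℂ))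
    (hv : ∀ t, v t ∈ stdRep n) :
    ιMulti ℂ l v ∈ Submodule.span ℂ
      (Set.range (fun S : ↥(Finset.powersetCard l (Finset.univ.erase z)) =>
        ιMulti ℂ l (Gvecs n l z S.1 (Finset.mem_powersetCard.mp S.2).2))) := by
  have h1 := span_expansion l (fun k : ↥(Finset.univ.erase z) => evec n (k : Fin n) - evec n z)
    v (fun t => stdRep_mem_span_c z _ (hv t))
  refine Submodule.span_le.mpr ?_ h1
  rintro _ ⟨κ, hκ, rfl⟩
  have hinj : Function.Injective (fun t => ((κ t : Fin n))) :=
    fun a b hab => hκ (Subtype.coe_injective hab)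
  set S : Finset (Fin n) := Finset.image (fun t => ((κ t : Fin n))) Finset.univ with hSdef
  have hScard : S.card = l := by
    rw [hSdef, Finset.card_image_of_injective _ hinj, Finset.card_univ, Fintype.card_fin]
  have hSsub : S ⊆ Finset.univ.erase z := by
    intro b hb
    rw [hSdef, Finset.mem_image] at hb
    obtain ⟨t, _, rfl⟩ := hb
    exact (κ t).2
  have hSmem : S ∈ Finset.powersetCard l (Finset.univ.erase z) :=
    Finset.mem_powersetCard.mpr ⟨hSsub, hScard⟩
  have h2 : ιMulti ℂ l ((fun k : ↥(Finset.univ.erase z) => evec n (k : Fin n) - evec n z) ∘ κ)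
      ∈ Submodule.span ℂ {ιMulti ℂ l (Gvecs n l z S hScard)} := by
    apply span_single
    intro t
    have hmem : ((κ t : Fin n)) ∈ S := by
      rw [hSdef]
      exact Finset.mem_image.mpr ⟨t, Finset.mem_univ t, rfl⟩
    refine Submodule.subset_span ⟨(S.orderIsoOfFin hScard).symm ⟨_, hmem⟩, ?_⟩
    rw [show Gvecs n l z S hScard ((S.orderIsoOfFin hScard).symm ⟨_, hmem⟩)
        = evec n ((S.orderIsoOfFin hScard ((S.orderIsoOfFin hScard).symm ⟨_, hmem⟩) : Fin n))
          - evec n z from rfl, OrderIso.apply_symm_apply]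
    rfl
  refine Submodule.span_le.mpr ?_ h2
  rintro _ rfl
  apply Submodule.subset_span
  exact ⟨⟨S, hSmem⟩, rfl⟩

lemma Wsub_le_span_G (l : ℕ) (z : Fin n) :
    Wsub n l ≤ Submodule.span ℂ
      (Set.range (fun S : ↥(Finset.powersetCard l (Finset.univ.erase z)) =>
        ιMulti ℂ l (Gvecs n l z S.1 (Finset.mem_powersetCard.mp S.2).2))) := by
  intro x hx
  obtain ⟨y, hy, rfl⟩ := hx
  rw [← ιMulti_span_fixedDegree] at hy
  have hmem : (ExteriorAlgebra.map (stdRep n).subtype).toLinearMap y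
      ∈ Submodule.map (ExteriorAlgebra.map (stdRep n).subtype).toLinearMap
        (Submodule.span ℂ (Set.range (ιMulti ℂ l))) := ⟨y, hy, rfl⟩
  rw [Submodule.map_span] at hmem
  refine Submodule.span_le.mpr ?_ hmem
  rintro _ ⟨_, ⟨v', rfl⟩, rfl⟩
  rw [show (ExteriorAlgebra.map (stdRep n).subtype).toLinearMap (ιMulti ℂ l v')
      = ExteriorAlgebra.map (stdRep n).subtype (ιMulti ℂ l v') from rfl, map_apply_ιMulti]
  exact ιMulti_mem_span_G l z _ (fun t => ((v' t).2 : _))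

end AuxSpanW
/-- The span of the `w_α` with `{i,j} ⊆ α` is exactly the `(−1)`-eigenspace of the
transposition `(i j)` acting on `W_{n,l}`, and this eigenspace has dimension `C(n−2, l−1)`. -/
theorem statement_6 (n l : ℕ) (hn : 1 ≤ n) (hl1 : 1 ≤ l) (hl2 : l ≤ n - 1)
    (i j : Fin n) (hij : i ≠ j) :
    Submodule.span ℂ
        {v : EA n | ∃ (α : Finset (Fin n)) (hα : α.card = l + 1),
          i ∈ α ∧ j ∈ α ∧ v = wvec n l α hα}
      = Wsub n l ⊓ Module.End.eigenspace (permMap n (Equiv.swap i j)) (-1) ∧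
    Module.finrank ℂ
        ↥(Wsub n l ⊓ Module.End.eigenspace (permMap n (Equiv.swap i j)) (-1))
      = Nat.choose (n - 2) (l - 1) := by
  classical
  obtain ⟨l', rfl⟩ : ∃ l', l = l' + 1 := ⟨l - 1, by omega⟩
  have hn2 : 2 ≤ n := by omega
  set D : Finset (Fin n) := (Finset.univ.erase i).erase j with hD
  have hjD : j ∉ D := fun h => (Finset.mem_erase.mp h).1 rfl
  have hiD : i ∉ D := fun h => (Finset.mem_erase.mp (Finset.mem_erase.mp h).2).1 rfl
  have hDcard : D.card = n - 2 := by
    rw [hD, Finset.card_erase_of_mem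
        (Finset.mem_erase.mpr ⟨hij.symm, Finset.mem_univ j⟩),
      Finset.card_erase_of_mem (Finset.mem_univ i), Finset.card_univ, Fintype.card_fin]
    omega
  have hmemD : ∀ β : Finset (Fin n), ∀ k : ℕ, β ∈ Finset.powersetCard k D →
      i ∉ β ∧ j ∉ β := by
    intro β k hβ
    have hsub := (Finset.mem_powersetCard.mp hβ).1
    exact ⟨fun h => hiD (hsub h), fun h => hjD (hsub h)⟩
  -- the h-family
  set hB : ↥(Finset.powersetCard l' D) → EA n := fun β =>
    ιMulti ℂ (l' + 1) (hvecs n l' i j β.1 (Finset.mem_powersetCard.mp β.2).2) with hhB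
  set Wm : Submodule ℂ (EA n) :=
    Wsub n (l' + 1) ⊓ Module.End.eigenspace (permMap n (Equiv.swap i j)) (-1) with hWm
  set Wp : Submodule ℂ (EA n) :=
    Wsub n (l' + 1) ⊓ Module.End.eigenspace (permMap n (Equiv.swap i j)) 1 with hWp
  have hBind : LinearIndependent ℂ hB := by
    apply linearIndependent_of_dual hB (fun β =>
      pairFun n (l' + 1) (hdvecs n l' i j β.1 (Finset.mem_powersetCard.mp β.2).2))
    · intro β
      rw [hhB, pair_h l' i j hij _ _ _ _ (hmemD _ _ β.2).1 (hmemD _ _ β.2).2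
        (hmemD _ _ β.2).1 (hmemD _ _ β.2).2, if_pos rfl]
      norm_num
    · intro β γ hne
      rw [hhB, pair_h l' i j hij _ _ _ _ (hmemD _ _ β.2).1 (hmemD _ _ β.2).2
        (hmemD _ _ γ.2).1 (hmemD _ _ γ.2).2, if_neg]
      intro hc
      exact hne (Subtype.ext hc.symm)
  have hBrank : Module.finrank ℂ ↥(Submodule.span ℂ (Set.range hB))
      = Nat.choose (n - 2) l' := by
    rw [finrank_span_eq_card hBind, Fintype.card_coe, Finset.card_powersetCard, hDcard]
  have hBle : Submodule.span ℂ (Set.range hB) ≤ Wm := by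
    rw [Submodule.span_le]
    rintro _ ⟨β, rfl⟩
    refine ⟨hvecs_mem_Wsub _ _ _ _ _, ?_⟩
    rw [SetLike.mem_coe, Module.End.mem_eigenspace_iff, hhB,
      perm_hvecs _ _ _ _ _ (hmemD _ _ β.2).1 (hmemD _ _ β.2).2, neg_one_smul]
  -- the g-family
  set gB : ↥(Finset.powersetCard (l' + 1) D) → EA n := fun S =>
    ιMulti ℂ (l' + 1) (gvecs n (l' + 1) i j S.1 (Finset.mem_powersetCard.mp S.2).2) with hgB
  have hgind : LinearIndependent ℂ gB := by
    apply linearIndependent_of_dual gB (fun S =>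
      pairFun n (l' + 1) (dvecs n (l' + 1) S.1 (Finset.mem_powersetCard.mp S.2).2))
    · intro S
      rw [hgB, pair_g _ i j _ _ _ _ (hmemD _ _ S.2).1 (hmemD _ _ S.2).2, if_pos rfl]
      norm_num
    · intro S T hne
      rw [hgB, pair_g _ i j _ _ _ _ (hmemD _ _ S.2).1 (hmemD _ _ S.2).2, if_neg]
      intro hc
      exact hne (Subtype.ext hc.symm)
  have hgrank : Module.finrank ℂ ↥(Submodule.span ℂ (Set.range gB))
      = Nat.choose (n - 2) (l' + 1) := by
    rw [finrank_span_eq_card hgind, Fintype.card_coe, Finset.card_powersetCard, hDcard]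
  have hgle : Submodule.span ℂ (Set.range gB) ≤ Wp := by
    rw [Submodule.span_le]
    rintro _ ⟨S, rfl⟩
    refine ⟨gvecs_mem_Wsub _ _ _ _ _, ?_⟩
    rw [SetLike.mem_coe, Module.End.mem_eigenspace_iff, hgB,
      perm_gvecs _ _ _ _ _ (hmemD _ _ S.2).1 (hmemD _ _ S.2).2, one_smul]
  -- the G-family spanning W
  have hWle := Wsub_le_span_G (n := n) (l' + 1) i
  have hGle : Submodule.span ℂ
      (Set.range (fun S : ↥(Finset.powersetCard (l' + 1) (Finset.univ.erase i)) =>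
        ιMulti ℂ (l' + 1) (Gvecs n (l' + 1) i S.1 (Finset.mem_powersetCard.mp S.2).2)))
      ≤ Wsub n (l' + 1) := by
    rw [Submodule.span_le]
    rintro _ ⟨S, rfl⟩
    exact Gvecs_mem_Wsub _ _ _ _
  have hWeq := le_antisymm hWle hGle
  have hGind : LinearIndependent ℂ
      (fun S : ↥(Finset.powersetCard (l' + 1) (Finset.univ.erase i)) =>
        ιMulti ℂ (l' + 1) (Gvecs n (l' + 1) i S.1 (Finset.mem_powersetCard.mp S.2).2)) := by
    apply linearIndependent_of_dual _ (fun S =>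
      pairFun n (l' + 1) (dvecs n (l' + 1) S.1 (Finset.mem_powersetCard.mp S.2).2))
    · intro S
      have hiS : i ∉ S.1 := fun h =>
        (Finset.mem_erase.mp ((Finset.mem_powersetCard.mp S.2).1 h)).1 rfl
      rw [pair_G _ i _ _ _ _ hiS, if_pos rfl]
      norm_num
    · intro S T hne
      have hiS : i ∉ S.1 := fun h =>
        (Finset.mem_erase.mp ((Finset.mem_powersetCard.mp S.2).1 h)).1 rfl
      rw [pair_G _ i _ _ _ _ hiS, if_neg]
      intro hc
      exact hne (Subtype.ext hc.symm)
  have hWrank : Module.finrank ℂ ↥(Wsub n (l' + 1)) = Nat.choose (n - 1) (l' + 1) := by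
    rw [hWeq, finrank_span_eq_card hGind, Fintype.card_coe, Finset.card_powersetCard,
      Finset.card_erase_of_mem (Finset.mem_univ i), Finset.card_univ, Fintype.card_fin]
  have hWfd : FiniteDimensional ℂ ↥(Wsub n (l' + 1)) := by
    rw [hWeq]
    exact FiniteDimensional.span_of_finite ℂ (Set.finite_range _)
  have hWmfd : FiniteDimensional ℂ ↥Wm := Submodule.finiteDimensional_of_le inf_le_left
  have hWpfd : FiniteDimensional ℂ ↥Wp := Submodule.finiteDimensional_of_le inf_le_left
  -- disjointness of the eigenspaces
  have hdisj : Wp ⊓ Wm = ⊥ := by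
    rw [eq_bot_iff]
    intro x hx
    obtain ⟨hxp, hxm⟩ := Submodule.mem_inf.mp hx
    have hp := (Submodule.mem_inf.mp hxp).2
    have hm := (Submodule.mem_inf.mp hxm).2
    rw [Module.End.mem_eigenspace_iff] at hp hm
    have h1 : (1 : ℂ) • x - (-1 : ℂ) • x = 0 := by
      rw [← hp, ← hm, sub_self]
    rw [← sub_smul] at h1
    norm_num at h1
    rw [Submodule.mem_bot]
    exact h1
  have hsum : Module.finrank ℂ ↥Wp + Module.finrank ℂ ↥Wm
      = Module.finrank ℂ ↥(Wp ⊔ Wm) := by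
    have h := Submodule.finrank_sup_add_finrank_inf_eq Wp Wm
    rw [hdisj, finrank_bot, add_zero] at h
    exact h.symm
  have hle2 : Module.finrank ℂ ↥(Wp ⊔ Wm) ≤ Module.finrank ℂ ↥(Wsub n (l' + 1)) :=
    Submodule.finrank_mono (sup_le inf_le_left inf_le_left)
  have hgrank_le : Nat.choose (n - 2) (l' + 1) ≤ Module.finrank ℂ ↥Wp := by
    rw [← hgrank]
    exact Submodule.finrank_mono hgle
  have hhrank_le : Nat.choose (n - 2) l' ≤ Module.finrank ℂ ↥Wm := by
    rw [← hBrank]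
    exact Submodule.finrank_mono hBle
  have hpascal : Nat.choose (n - 1) (l' + 1)
      = Nat.choose (n - 2) l' + Nat.choose (n - 2) (l' + 1) := by
    have h : n - 1 = (n - 2) + 1 := by omega
    rw [h]
    exact Nat.choose_succ_succ _ _
  have hWm_rank : Module.finrank ℂ ↥Wm = Nat.choose (n - 2) l' := by
    have := hsum
    rw [hWrank, hpascal] at hle2
    omega
  have hspan_eq : Submodule.span ℂ (Set.range hB) = Wm :=
    Submodule.eq_of_le_of_finrank_le hBle (by rw [hBrank, hWm_rank])
  -- identify the span of the w_α with the span of the h-family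
  have hset_eq : Submodule.span ℂ
      {v : EA n | ∃ (α : Finset (Fin n)) (hα : α.card = l' + 1 + 1),
        i ∈ α ∧ j ∈ α ∧ v = wvec n (l' + 1) α hα}
      = Submodule.span ℂ (Set.range hB) := by
    apply le_antisymm
    · rw [Submodule.span_le]
      rintro _ ⟨α, hα, hiα, hjα, rfl⟩
      have hβcard : ((α.erase i).erase j).card = l' := by
        rw [Finset.card_erase_of_mem
            (Finset.mem_erase.mpr ⟨hij.symm, hjα⟩),
          Finset.card_erase_of_mem hiα, hα]
        omega
      have hβmem : (α.erase i).erase j ∈ Finset.powersetCard l' D := by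
        refine Finset.mem_powersetCard.mpr ⟨?_, hβcard⟩
        intro b hb
        obtain ⟨hbj, hb2⟩ := Finset.mem_erase.mp hb
        obtain ⟨hbi, _⟩ := Finset.mem_erase.mp hb2
        rw [hD]
        exact Finset.mem_erase.mpr ⟨hbj, Finset.mem_erase.mpr ⟨hbi, Finset.mem_univ b⟩⟩
      have h1 := wvec_mem_span_h l' i j α hα hiα hjα hβcard
      refine Submodule.span_le.mpr ?_ h1
      rintro _ rfl
      apply Submodule.subset_span
      exact ⟨⟨(α.erase i).erase j, hβmem⟩, rfl⟩
    · rw [Submodule.span_le]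
      rintro _ ⟨β, rfl⟩
      have hiβ := (hmemD _ _ β.2).1
      have hjβ := (hmemD _ _ β.2).2
      have hβcard := (Finset.mem_powersetCard.mp β.2).2
      have hαcard : (insert i (insert j β.1)).card = l' + 1 + 1 := by
        rw [Finset.card_insert_of_notMem, Finset.card_insert_of_notMem hjβ, hβcard]
        intro h
        rcases Finset.mem_insert.mp h with h | h
        · exact hij h
        · exact hiβ h
      have h1 := h_mem_span_w l' i j hij β.1 hβcard hiβ hjβ hαcard
      refine Submodule.span_le.mpr ?_ h1
      rintro _ rfl
      apply Submodule.subset_span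
      exact ⟨insert i (insert j β.1), hαcard, Finset.mem_insert_self _ _,
        Finset.mem_insert_of_mem (Finset.mem_insert_self _ _), rfl⟩
  constructor
  · rw [hset_eq, hspan_eq]
  · rw [show Module.finrank ℂ ↥(Wsub n (l' + 1)
          ⊓ Module.End.eigenspace (permMap n (Equiv.swap i j)) (-1))
        = Module.finrank ℂ ↥Wm from rfl, hWm_rank, Nat.add_sub_cancel]
end
end

section
/- Let f: {1,…,n} → {1,…,m} be a surjection of sets with l+1 ≤ m ≤ n, let g and g' be two sections of f, and let α be an (l+1)-subset of {1,…,m}. Then H_{g(α)} ∩ F_f = H_{g'(α)} ∩ F_f, i.e., the intersection of a hyperplane of A_n indexed by the image of α under a section of f with the special flat F_f does not depend on the choice of section. -/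
noncomputable section

open ExteriorAlgebra

namespace AuxDet
open Matrix

lemma det_border (l : ℕ) (c : Fin l → Fin (l + 1) → ℂ) :
    Matrix.det (Matrix.of fun (p q : Fin l) => c p q.succ - c p 0)
      = Matrix.det (Matrix.of (Fin.cons (fun _ => (1 : ℂ)) c)) := by
  set N : Matrix (Fin (l + 1)) (Fin (l + 1)) ℂ := Matrix.of (Fin.cons (fun _ => (1 : ℂ)) c) with hN
  set U : Matrix (Fin (l + 1)) (Fin (l + 1)) ℂ :=
    Matrix.of (fun k j => if k = 0 then (if j = 0 then 1 else -1) else (if k = j then 1 else 0)) with hU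
  have hUdet : U.det = 1 := by
    rw [Matrix.det_of_upperTriangular]
    · simp [hU]
    · intro i j hij
      have h1 : i ≠ 0 := by
        rintro rfl
        exact absurd hij (by simp)
      have h2 : i ≠ j := by rintro rfl; exact lt_irrefl _ hij
      simp [hU, h1, h2]
  have hmul : ∀ i j, (N * U) i j = if j = 0 then N i 0 else N i j - N i 0 := by
    intro i j
    rw [Matrix.mul_apply]
    by_cases hj : j = 0
    · subst hj
      rw [Finset.sum_eq_single 0]
      · simp [hU]
      · intro k _ hk; simp [hU, hk, Ne.symm hk]
      · simp
    · rw [Finset.sum_eq_add_of_mem 0 j (Finset.mem_univ _) (Finset.mem_univ _) (Ne.symm hj) ?_]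
      · simp [hU, hj, Ne.symm hj]; ring
      · intro k _ hk
        obtain ⟨hk0, hkj⟩ := not_or.mp (by simpa using hk)
        simp [hU, hk0, hkj]
  have hdet : (N * U).det = N.det := by rw [Matrix.det_mul, hUdet, mul_one]
  have hrow : ∀ j : Fin (l + 1), (N * U) 0 j = if j = 0 then 1 else 0 := by
    intro j
    rw [hmul]
    by_cases hj : j = 0 <;> simp [hj, hN]
  have hsub : (N * U).submatrix Fin.succ ((0 : Fin (l + 1)).succAbove)
      = Matrix.of fun (p q : Fin l) => c p q.succ - c p 0 := by
    ext p q
    simp only [Matrix.submatrix_apply, Fin.zero_succAbove, Matrix.of_apply]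
    rw [hmul, if_neg (Fin.succ_ne_zero q)]
    simp [hN, Fin.cons_succ]
  have key : (N * U).det = Matrix.det (Matrix.of fun (p q : Fin l) => c p q.succ - c p 0) := by
    rw [Matrix.det_succ_row_zero (N * U), Finset.sum_eq_single 0]
    · rw [hrow, if_pos rfl, hsub]
      simp
    · intro j _ hj
      rw [hrow, if_neg hj]; ring
    · simp
  rw [← key, hdet]

lemma det_expand (l : ℕ) (c : Fin l → Fin (l + 1) → ℂ) :
    Matrix.det (Matrix.of (Fin.cons (fun _ => (1 : ℂ)) c))
      = ∑ j : Fin (l + 1), (-1 : ℂ) ^ (j : ℕ) *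
          Matrix.det (Matrix.of fun (p q : Fin l) => c p (j.succAbove q)) := by
  rw [Matrix.det_succ_row_zero]
  refine Finset.sum_congr rfl fun j _ => ?_
  have hsub : (Matrix.of (Fin.cons (fun _ => (1 : ℂ)) c)).submatrix Fin.succ j.succAbove
      = Matrix.of fun (p q : Fin l) => c p (j.succAbove q) := by
    ext p q
    simp [Fin.cons_succ]
  rw [hsub]
  simp [Fin.cons_zero]


lemma val_succAbove {N : ℕ} (i : Fin (N + 1)) (q : Fin N) :
    ((i.succAbove q) : ℕ) = if (q : ℕ) < (i : ℕ) then (q : ℕ) else (q : ℕ) + 1 := by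
  rcases lt_or_ge (q.castSucc) i with h | h
  · rw [Fin.succAbove_of_castSucc_lt _ _ h, if_pos (by simpa [Fin.lt_def] using h)]
    rfl
  · rw [Fin.succAbove_of_le_castSucc _ _ h, if_neg (by simpa [Fin.le_def, not_lt] using h)]
    rfl

lemma comp_succAbove {l : ℕ} (i : Fin (l + 2)) (j : Fin (l + 1)) (h : (j : ℕ) < (i : ℕ))
    (hi : i ≠ 0) :
    i.succAbove ∘ j.succAbove = (j.castSucc).succAbove ∘ (i.pred hi).succAbove := by
  funext q
  simp only [Function.comp_apply]
  apply Fin.ext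
  rw [val_succAbove, val_succAbove, val_succAbove, val_succAbove, Fin.coe_castSucc, Fin.coe_pred]
  split_ifs <;> omega

lemma simplicial_sum {M : Type} [AddCommGroup M] [Module ℂ M] (l : ℕ)
    (G : (Fin l → Fin (l + 2)) → M) :
    ∑ p : Fin (l + 2) × Fin (l + 1),
      ((-1 : ℂ) ^ ((p.1 : ℕ) + (p.2 : ℕ))) • G (p.1.succAbove ∘ p.2.succAbove) = 0 := by
  classical
  apply Finset.sum_ninvolution
    (g := fun p : Fin (l + 2) × Fin (l + 1) =>
      if h : (p.2 : ℕ) < (p.1 : ℕ) then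
        (p.2.castSucc, p.1.pred (by intro h0; have hv := congrArg Fin.val h0; simp only [Fin.val_zero] at hv; omega))
      else
        (p.2.succ, p.1.castPred (by intro h0; have hv := congrArg Fin.val h0; simp at hv; have := p.2.isLt; omega)))
  · -- hg₁ : ∀ a, f a + f (g a) = 0
    intro p
    by_cases h : (p.2 : ℕ) < (p.1 : ℕ)
    · rw [dif_pos h]
      have hcomp := comp_succAbove p.1 p.2 h (by intro h0; have hv := congrArg Fin.val h0; simp only [Fin.val_zero] at hv; omega)
      simp only
      rw [← hcomp]
      rw [← add_smul]
      convert zero_smul ℂ _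
      have h1 : (p.1 : ℕ) ≥ 1 := by omega
      have : ((p.1:ℕ)) + (p.2:ℕ) = ((p.2.castSucc : ℕ) + ((p.1.pred (by intro h0; have hv := congrArg Fin.val h0; simp only [Fin.val_zero] at hv; omega)) : ℕ)) + 1 := by
        rw [Fin.coe_castSucc, Fin.coe_pred]; omega
      rw [this, pow_succ]
      ring
    · rw [dif_neg h]
      rw [not_lt] at h
      have hlt : ((p.1.castPred (by intro h0; have hv := congrArg Fin.val h0; simp at hv; have := p.2.isLt; omega) : Fin (l+1)) : ℕ) < ((p.2.succ : Fin (l+2)) : ℕ) := by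
        simp [Fin.coe_castPred, Fin.val_succ]; omega
      have hcomp := comp_succAbove p.2.succ (p.1.castPred (by intro h0; have hv := congrArg Fin.val h0; simp at hv; have := p.2.isLt; omega)) hlt (Fin.succ_ne_zero _)
      simp only
      rw [hcomp]
      have e1 : ((p.1.castPred (by intro h0; have hv := congrArg Fin.val h0; simp at hv; have := p.2.isLt; omega)).castSucc) = p.1 := Fin.castSucc_castPred _ _
      have e2 : ((p.2.succ).pred (Fin.succ_ne_zero _)) = p.2 := Fin.pred_succ _
      rw [e1, e2, ← add_smul]
      convert zero_smul ℂ _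
      have : ((p.2.succ : Fin (l+2)) : ℕ) + ((p.1.castPred (by intro h0; have hv := congrArg Fin.val h0; simp at hv; have := p.2.isLt; omega) : Fin (l+1)) : ℕ) = ((p.1 : ℕ) + (p.2 : ℕ)) + 1 := by
        simp [Fin.val_succ, Fin.coe_castPred]; omega
      rw [this, pow_succ]
      ring
  · -- hg₂ : f a ≠ 0 → g a ≠ a
    intro p _
    by_cases h : (p.2 : ℕ) < (p.1 : ℕ)
    · rw [dif_pos h]
      intro hEq
      have := congrArg (fun x => ((x.1 : Fin (l+2)) : ℕ)) hEq
      simp only [Fin.coe_castSucc] at this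
      omega
    · rw [dif_neg h]
      intro hEq
      have := congrArg (fun x => ((x.1 : Fin (l+2)) : ℕ)) hEq
      simp only [Fin.val_succ] at this
      rw [not_lt] at h
      omega
  · intro p; exact Finset.mem_univ _
  · -- involution
    intro p
    by_cases h : (p.2 : ℕ) < (p.1 : ℕ)
    · rw [dif_pos h]
      have hc : ¬ (((p.1.pred (by intro h0; have hv := congrArg Fin.val h0; simp only [Fin.val_zero] at hv; omega)) : ℕ) < ((p.2.castSucc : Fin (l+2)) : ℕ)) := by
        rw [Fin.coe_pred, Fin.coe_castSucc]; omega
      rw [dif_neg hc]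
      ext
      · simp [Fin.succ_pred]
      · simp [Fin.castPred_castSucc]
    · rw [dif_neg h]
      rw [not_lt] at h
      have hc : (((p.1.castPred (by intro h0; have hv := congrArg Fin.val h0; simp at hv; have := p.2.isLt; omega)) : ℕ) < ((p.2.succ : Fin (l+2)) : ℕ)) := by
        simp [Fin.coe_castPred, Fin.val_succ]; omega
      rw [dif_pos hc]
      ext
      · simp [Fin.castSucc_castPred]
      · simp [Fin.pred_succ]

end AuxDet

namespace AuxP

/-- Package the degree-`l` alternating map family as a linear map. -/
def toFam (n l : ℕ) : ((Fin n → ℂ) [⋀^Fin l]→ₗ[ℂ] ℂ) →ₗ[ℂ]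
    (∀ i, (Fin n → ℂ) [⋀^Fin i]→ₗ[ℂ] ℂ) where
  toFun D := fun i => if h : l = i then h ▸ D else 0
  map_add' D E := by
    funext i
    simp only [Pi.add_apply]
    split_ifs with h
    · subst h; rfl
    · simp
  map_smul' c D := by
    funext i
    simp only [Pi.smul_apply, RingHom.id_apply]
    split_ifs with h
    · subst h; rfl
    · simp

def PhiL (n l : ℕ) : ((Fin n → ℂ) [⋀^Fin l]→ₗ[ℂ] ℂ) →ₗ[ℂ] (EA n →ₗ[ℂ] ℂ) :=
  (ExteriorAlgebra.liftAlternating (R := ℂ) (M := Fin n → ℂ) (N := ℂ)).comp (toFam n l)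

lemma pairFun_eq_PhiL (n l : ℕ) (u : Fin l → (Fin n → ℂ)) :
    pairFun n l u = PhiL n l (detPair n l u) := rfl

lemma stdInner_apply (n : ℕ) (u x : Fin n → ℂ) :
    stdInner n u x = ∑ k, x k * (starRingEnd ℂ) (u k) := rfl

lemma stdInner_evec (n : ℕ) (a : Fin n) (x : Fin n → ℂ) :
    stdInner n (evec n a) x = x a := by
  rw [stdInner_apply]
  rw [Finset.sum_eq_single a]
  · simp [evec]
  · intro k _ hk; simp [evec, Pi.single_apply, hk]
  · simp

lemma stdInner_evec_sub (n : ℕ) (a b : Fin n) (x : Fin n → ℂ) :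
    stdInner n (evec n a - evec n b) x = x a - x b := by
  rw [stdInner_apply]
  have : ∀ k, x k * (starRingEnd ℂ) ((evec n a - evec n b) k)
      = x k * (starRingEnd ℂ) (evec n a k) - x k * (starRingEnd ℂ) (evec n b k) := by
    intro k; simp [mul_sub]
  rw [Finset.sum_congr rfl fun k _ => this k, Finset.sum_sub_distrib]
  rw [← stdInner_apply, ← stdInner_apply, stdInner_evec, stdInner_evec]

lemma detPair_apply (n l : ℕ) (u v : Fin l → (Fin n → ℂ)) :
    detPair n l u v = Matrix.det (Matrix.of fun p q => stdInner n (u q) (v p)) := rfl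

/-- The "pure-columns" determinant alternating map. -/
def Dfun (n l : ℕ) (b : Fin l → Fin n) : (Fin n → ℂ) [⋀^Fin l]→ₗ[ℂ] ℂ :=
  detPair n l (fun j => evec n (b j))

lemma Dfun_apply (n l : ℕ) (b : Fin l → Fin n) (v : Fin l → (Fin n → ℂ)) :
    Dfun n l b v = Matrix.det (Matrix.of fun p q => v p (b q)) := by
  rw [Dfun, detPair_apply]
  congr 1
  ext p q
  simp [stdInner_evec]


lemma alt_sum_apply {α : Type*} {n l : ℕ} (s : Finset α)
    (f : α → ((Fin n → ℂ) [⋀^Fin l]→ₗ[ℂ] ℂ)) (v : Fin l → (Fin n → ℂ)) :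
    (∑ a ∈ s, f a) v = ∑ a ∈ s, f a v := by
  classical
  induction s using Finset.cons_induction with
  | empty => simp
  | cons a s ha ih => rw [Finset.sum_cons, Finset.sum_cons, AlternatingMap.add_apply, ih]

/-- The "simplex" alternating map attached to an `(l+1)`-tuple of indices. -/
def EaltM (n l : ℕ) (b : Fin (l + 1) → Fin n) : (Fin n → ℂ) [⋀^Fin l]→ₗ[ℂ] ℂ :=
  ∑ i : Fin (l + 1), ((-1 : ℂ) ^ (i : ℕ)) • Dfun n l (b ∘ i.succAbove)

lemma EaltM_apply (n l : ℕ) (b : Fin (l + 1) → Fin n) (v : Fin l → (Fin n → ℂ)) :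
    EaltM n l b v
      = Matrix.det (Matrix.of (Fin.cons (fun _ => (1 : ℂ)) (fun p q => v p (b q)))) := by
  rw [AuxDet.det_expand]
  rw [EaltM]
  rw [alt_sum_apply]
  refine Finset.sum_congr rfl fun i _ => ?_
  rw [AlternatingMap.smul_apply, Dfun_apply]
  simp [smul_eq_mul]

lemma detPair_uvecs (n l : ℕ) (T : Finset (Fin n)) (hT : T.card = l + 1) :
    detPair n l (uvecs n l T hT)
      = EaltM n l (fun i => ((T.orderIsoOfFin hT i : Fin n))) := by
  ext v
  rw [detPair_apply, EaltM_apply, ← AuxDet.det_border]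
  congr 1
  ext p q
  simp only [Matrix.of_apply]
  rw [uvecs]
  exact stdInner_evec_sub n _ _ (v p)

lemma EaltM_comp_perm (n l : ℕ) (b : Fin (l + 1) → Fin n) (σ : Equiv.Perm (Fin (l + 1))) :
    EaltM n l (b ∘ σ) = (((Equiv.Perm.sign σ : ℤ)) : ℂ) • EaltM n l b := by
  ext v
  rw [AlternatingMap.smul_apply, EaltM_apply, EaltM_apply]
  have hsub : (Matrix.of (Fin.cons (fun _ => (1 : ℂ)) (fun p q => v p (b (σ q)))))
      = (Matrix.of (Fin.cons (fun _ => (1 : ℂ)) (fun p q => v p (b q)))).submatrix id σ := by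
    ext i j
    refine Fin.cases ?_ (fun p => ?_) i
    · simp
    · simp [Fin.cons_succ]
  simp only [Function.comp_apply]
  rw [hsub, Matrix.det_permute']
  simp [smul_eq_mul]

lemma EaltM_simplicial (n l : ℕ) (C : Fin (l + 2) → Fin n) :
    ∑ i : Fin (l + 2), ((-1 : ℂ) ^ (i : ℕ)) • EaltM n l (C ∘ i.succAbove) = 0 := by
  have : ∀ i : Fin (l + 2), ((-1 : ℂ) ^ (i : ℕ)) • EaltM n l (C ∘ i.succAbove)
      = ∑ j : Fin (l + 1), ((-1 : ℂ) ^ ((i : ℕ) + (j : ℕ))) •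
          Dfun n l (C ∘ (i.succAbove ∘ j.succAbove)) := by
    intro i
    rw [EaltM, Finset.smul_sum]
    refine Finset.sum_congr rfl fun j _ => ?_
    rw [smul_smul, ← pow_add]
    rfl
  rw [Finset.sum_congr rfl fun i _ => this i]
  rw [← Finset.sum_product']
  exact AuxDet.simplicial_sum l (fun d => Dfun n l (C ∘ d))

/-- The functional on the exterior algebra attached to an `(l+1)`-tuple. -/
def PsiF (n l : ℕ) (b : Fin (l + 1) → Fin n) : EA n →ₗ[ℂ] ℂ := PhiL n l (EaltM n l b)

lemma pairFun_uvecs_eq_PsiF (n l : ℕ) (T : Finset (Fin n)) (hT : T.card = l + 1) :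
    pairFun n l (uvecs n l T hT) = PsiF n l (fun i => ((T.orderIsoOfFin hT i : Fin n))) := by
  rw [pairFun_eq_PhiL, detPair_uvecs, PsiF]

lemma PsiF_comp_perm (n l : ℕ) (b : Fin (l + 1) → Fin n) (σ : Equiv.Perm (Fin (l + 1))) :
    PsiF n l (b ∘ σ) = (((Equiv.Perm.sign σ : ℤ)) : ℂ) • PsiF n l b := by
  rw [PsiF, EaltM_comp_perm, map_smul, PsiF]

lemma PsiF_simplicial (n l : ℕ) (C : Fin (l + 2) → Fin n) (v : EA n) :
    ∑ i : Fin (l + 2), ((-1 : ℂ) ^ (i : ℕ)) * (PsiF n l (C ∘ i.succAbove) v) = 0 := by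
  have h1 : ∑ i : Fin (l + 2), ((-1 : ℂ) ^ (i : ℕ)) • PsiF n l (C ∘ i.succAbove) = 0 := by
    have : ∑ i : Fin (l + 2), ((-1 : ℂ) ^ (i : ℕ)) • PsiF n l (C ∘ i.succAbove)
        = PhiL n l (∑ i : Fin (l + 2), ((-1 : ℂ) ^ (i : ℕ)) • EaltM n l (C ∘ i.succAbove)) := by
      rw [map_sum]
      exact Finset.sum_congr rfl fun i _ => (map_smul _ _ _).symm
    rw [this, EaltM_simplicial, map_zero]
  have h2 : (∑ i : Fin (l + 2), ((-1 : ℂ) ^ (i : ℕ)) • PsiF n l (C ∘ i.succAbove)) v = 0 := by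
    rw [h1]; rfl
  rw [LinearMap.sum_apply] at h2
  simpa [smul_eq_mul] using h2



lemma PsiF_eq_smul_pairFun (n l : ℕ) (b : Fin (l + 1) → Fin n) (hb : Function.Injective b)
    (hT : (Finset.image b Finset.univ).card = l + 1) :
    ∃ c : ℂ, c ≠ 0 ∧
      PsiF n l b = c • pairFun n l (uvecs n l (Finset.image b Finset.univ) hT) := by
  classical
  set T := Finset.image b Finset.univ with hTdef
  set t : Fin (l + 1) → Fin n := fun i => ((T.orderIsoOfFin hT i : Fin n)) with ht
  have hmem : ∀ j, b j ∈ T := fun j => Finset.mem_image_of_mem b (Finset.mem_univ j)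
  set u : Fin (l + 1) → Fin (l + 1) := fun j => (T.orderIsoOfFin hT).symm ⟨b j, hmem j⟩ with hu
  have hinj : Function.Injective u := by
    intro x y hxy
    apply hb
    have := congrArg (fun z => ((T.orderIsoOfFin hT z : T) : Fin n)) hxy
    simpa [hu] using this
  have hbij := Finite.injective_iff_bijective.mp hinj
  set σ : Equiv.Perm (Fin (l + 1)) := Equiv.ofBijective u hbij with hσ
  have hcomp : b = t ∘ σ := by
    funext j
    show b j = t (u j)
    exact (congrArg Subtype.val ((T.orderIsoOfFin hT).apply_symm_apply ⟨b j, hmem j⟩)).symm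
  refine ⟨((Equiv.Perm.sign σ : ℤ) : ℂ), ?_, ?_⟩
  · rcases Int.units_eq_one_or (Equiv.Perm.sign σ) with h | h <;> simp [h]
  · rw [pairFun_uvecs_eq_PsiF, ← ht, hcomp, PsiF_comp_perm]

lemma step (n m l : ℕ) (f : Fin n → Fin m) (t : Fin (l + 1) → Fin m)
    (ht : Function.Injective t)
    (k : Fin (l + 1)) (b b' : Fin (l + 1) → Fin n)
    (hfb : ∀ j, f (b j) = t j) (hfb' : ∀ j, f (b' j) = t j)
    (hbb' : ∀ j, j ≠ k → b j = b' j)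
    (v : EA n)
    (hv : ∀ (T : Finset (Fin n)) (hT : T.card = l + 1), (T.image f).card ≤ l →
      pairFun n l (uvecs n l T hT) v = 0) :
    PsiF n l b v = PsiF n l b' v := by
  classical
  by_cases hkk : b k = b' k
  · have : b = b' := by
      funext j
      by_cases hj : j = k
      · subst hj; exact hkk
      · exact hbb' j hj
    rw [this]
  · set K := (k : ℕ) with hK
    have hkl := k.isLt
    set C : Fin (l + 2) → Fin n := fun p =>
      if hp : (p : ℕ) ≤ K then b ⟨(p : ℕ), by omega⟩
      else (if (p : ℕ) = K + 1 then b' k else b ⟨(p : ℕ) - 1, by have := p.isLt; omega⟩)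
      with hC
    have hC1 : ∀ (x : Fin (l + 2)) (hx : (x : ℕ) ≤ K),
        C x = b ⟨(x : ℕ), by omega⟩ := by
      intro x hx; simp only [hC]; rw [dif_pos hx]
    have hC2 : ∀ (x : Fin (l + 2)) (_ : (x : ℕ) = K + 1), C x = b' k := by
      intro x hx; simp only [hC]; rw [dif_neg (by omega), if_pos hx]
    have hC3 : ∀ (x : Fin (l + 2)) (hx : K + 1 < (x : ℕ)),
        C x = b ⟨(x : ℕ) - 1, by have := x.isLt; omega⟩ := by
      intro x hx; simp only [hC]; rw [dif_neg (by omega), if_neg (by omega)]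
    have hfC : ∀ p : Fin (l + 2), ∃ j : Fin (l + 1), f (C p) = t j ∧
        (j : ℕ) = (if (p : ℕ) ≤ K then (p : ℕ) else (p : ℕ) - 1) := by
      intro p
      by_cases hp : (p : ℕ) ≤ K
      · refine ⟨⟨(p : ℕ), by omega⟩, ?_, by rw [if_pos hp]⟩
        rw [hC1 p hp]; exact hfb _
      · by_cases hp1 : (p : ℕ) = K + 1
        · refine ⟨k, ?_, by rw [if_neg hp]; omega⟩
          rw [hC2 p hp1]; exact hfb' k
        · refine ⟨⟨(p : ℕ) - 1, by have := p.isLt; omega⟩, ?_, by rw [if_neg hp]⟩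
          rw [hC3 p (by omega)]; exact hfb _
    have hCinj : Function.Injective C := by
      intro p p' hpp'
      obtain ⟨j, hj, hjv⟩ := hfC p
      obtain ⟨j', hj', hj'v⟩ := hfC p'
      have hjj' : j = j' := ht (by rw [← hj, ← hj', hpp'])
      have hvv : (if (p : ℕ) ≤ K then (p : ℕ) else (p : ℕ) - 1)
          = (if (p' : ℕ) ≤ K then (p' : ℕ) else (p' : ℕ) - 1) := by
        rw [← hjv, ← hj'v, hjj']
      by_cases h1 : (p : ℕ) ≤ K <;> by_cases h2 : (p' : ℕ) ≤ K
      · rw [if_pos h1, if_pos h2] at hvv; exact Fin.ext hvv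
      · exfalso
        rw [if_pos h1, if_neg h2] at hvv
        have hp2 := p'.isLt
        have hp : (p : ℕ) = K := by omega
        have hp' : (p' : ℕ) = K + 1 := by omega
        have e1 : p = (⟨K, by omega⟩ : Fin (l + 2)) := Fin.ext hp
        have e2 : p' = (⟨K + 1, by omega⟩ : Fin (l + 2)) := Fin.ext hp'
        have v1 : C (⟨K, by omega⟩ : Fin (l + 2)) = b k := by
          rw [hC1 _ (le_refl K)]
        have v2 : C (⟨K + 1, by omega⟩ : Fin (l + 2)) = b' k := hC2 _ rfl
        have w1 : C p = b k := by rw [e1]; exact v1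
        have w2 : C p' = b' k := by rw [e2]; exact v2
        exact hkk (by rw [w1, w2] at hpp'; exact hpp')
      · exfalso
        rw [if_neg h1, if_pos h2] at hvv
        have hp2 := p.isLt
        have hp' : (p' : ℕ) = K := by omega
        have hp : (p : ℕ) = K + 1 := by omega
        have e1 : p' = (⟨K, by omega⟩ : Fin (l + 2)) := Fin.ext hp'
        have e2 : p = (⟨K + 1, by omega⟩ : Fin (l + 2)) := Fin.ext hp
        have v1 : C (⟨K, by omega⟩ : Fin (l + 2)) = b k := by
          rw [hC1 _ (le_refl K)]
        have v2 : C (⟨K + 1, by omega⟩ : Fin (l + 2)) = b' k := hC2 _ rfl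
        have w1 : C p' = b k := by rw [e1]; exact v1
        have w2 : C p = b' k := by rw [e2]; exact v2
        exact hkk (by rw [w1, w2] at hpp'; exact hpp'.symm)
      · rw [if_neg h1, if_neg h2] at hvv
        have hp2 := p.isLt
        have hp2' := p'.isLt
        exact Fin.ext (by omega)
    have hF2 : C ∘ (k.succ).succAbove = b := by
      funext j
      simp only [Function.comp_apply]
      have hval : (((k.succ).succAbove j) : ℕ)
          = if (j : ℕ) < K + 1 then (j : ℕ) else (j : ℕ) + 1 := by
        rw [AuxDet.val_succAbove, Fin.val_succ]
      by_cases hj : (j : ℕ) < K + 1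
      · rw [hC1 _ (by rw [hval, if_pos hj]; omega)]
        congr 1
        exact Fin.ext (by rw [hval, if_pos hj])
      · rw [hC3 _ (by rw [hval, if_neg hj]; omega)]
        congr 1
        refine Fin.ext ?_
        show ((k.succ.succAbove j) : ℕ) - 1 = (j : ℕ)
        rw [hval, if_neg hj]
        omega
    have hF1 : C ∘ (k.castSucc).succAbove = b' := by
      funext j
      simp only [Function.comp_apply]
      have hval : (((k.castSucc).succAbove j) : ℕ)
          = if (j : ℕ) < K then (j : ℕ) else (j : ℕ) + 1 := by
        rw [AuxDet.val_succAbove, Fin.coe_castSucc]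
      by_cases hj : (j : ℕ) < K
      · have e : C ((k.castSucc).succAbove j) = b j := by
          rw [hC1 _ (by rw [hval, if_pos hj]; omega)]
          congr 1
          exact Fin.ext (by rw [hval, if_pos hj])
        rw [e]
        exact hbb' j (by intro h; rw [h] at hj; omega)
      · by_cases hjk : (j : ℕ) = K
        · rw [hC2 _ (by rw [hval, if_neg hj]; omega)]
          have ejk : j = k := Fin.ext (by omega)
          rw [ejk]
        · have e : C ((k.castSucc).succAbove j) = b j := by
            rw [hC3 _ (by rw [hval, if_neg hj]; omega)]
            congr 1
            refine Fin.ext ?_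
            show ((k.castSucc.succAbove j) : ℕ) - 1 = (j : ℕ)
            rw [hval, if_neg hj]
            omega
          rw [e]
          exact hbb' j (by intro h; rw [h] at hjk; omega)
    have hsum := PsiF_simplicial n l C v
    have hvanish : ∀ i : Fin (l + 2), i ≠ k.castSucc → i ≠ k.succ →
        PsiF n l (C ∘ i.succAbove) v = 0 := by
      intro i hi1 hi2
      have hival : (i : ℕ) ≠ K ∧ (i : ℕ) ≠ K + 1 := by
        constructor
        · intro h; exact hi1 (Fin.ext (by rw [h, Fin.coe_castSucc]))
        · intro h; exact hi2 (Fin.ext (by rw [h, Fin.val_succ]))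
      set bi := C ∘ i.succAbove with hbi
      have hbinj : Function.Injective bi := hCinj.comp (Fin.succAbove_right_injective)
      have hTcard : (Finset.image bi Finset.univ).card = l + 1 := by
        rw [Finset.card_image_of_injective _ hbinj, Finset.card_univ, Fintype.card_fin]
      have hbad : ((Finset.image bi Finset.univ).image f).card ≤ l := by
        set j0 : Fin (l + 1) := ⟨if (i : ℕ) ≤ K then (i : ℕ) else (i : ℕ) - 1,
          by have := i.isLt; split_ifs <;> omega⟩ with hj0
        have hsubset : (Finset.image bi Finset.univ).image f
            ⊆ (Finset.image t Finset.univ).erase (t j0) := by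
          intro x hx
          rw [Finset.image_image] at hx
          obtain ⟨q, _, rfl⟩ := Finset.mem_image.mp hx
          obtain ⟨j, hj, hjv⟩ := hfC (i.succAbove q)
          rw [Finset.mem_erase]
          constructor
          · show f (bi q) ≠ t j0
            rw [hbi]
            simp only [Function.comp_apply]
            rw [hj]
            intro hEq
            have hjj0 : j = j0 := ht hEq
            have hne : ((i.succAbove q : Fin (l + 2)) : ℕ) ≠ (i : ℕ) :=
              fun h => (Fin.succAbove_ne i q) (Fin.ext h)
            have hjv0 : (j0 : ℕ) = if (i : ℕ) ≤ K then (i : ℕ) else (i : ℕ) - 1 := rfl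
            rw [hjj0, hjv0] at hjv
            have hd := (i.succAbove q).isLt
            have hi := i.isLt
            split_ifs at hjv <;> omega
          · show f (bi q) ∈ Finset.image t Finset.univ
            rw [hbi]
            simp only [Function.comp_apply]
            rw [hj]
            exact Finset.mem_image_of_mem t (Finset.mem_univ j)
        refine le_trans (Finset.card_le_card hsubset) ?_
        rw [Finset.card_erase_of_mem (Finset.mem_image_of_mem t (Finset.mem_univ j0)),
          Finset.card_image_of_injective _ ht, Finset.card_univ, Fintype.card_fin]
        omega
      have h0 := hv _ hTcard hbad
      obtain ⟨c, hc, hEq⟩ := PsiF_eq_smul_pairFun n l bi hbinj hTcard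
      have happ := congrArg (fun L : EA n →ₗ[ℂ] ℂ => L v) hEq
      simp only [LinearMap.smul_apply, smul_eq_mul] at happ
      rw [happ, h0, mul_zero]
    have hpairne : (k.castSucc : Fin (l + 2)) ≠ k.succ := by
      intro h
      have := congrArg Fin.val h
      rw [Fin.coe_castSucc, Fin.val_succ] at this
      omega
    have hzero : ∀ x ∈ (Finset.univ : Finset (Fin (l + 2))),
        x ∉ ({k.castSucc, k.succ} : Finset (Fin (l + 2))) →
        ((-1 : ℂ) ^ (x : ℕ)) * (PsiF n l (C ∘ x.succAbove) v) = 0 := by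
      intro x _ hx
      simp only [Finset.mem_insert, Finset.mem_singleton, not_or] at hx
      rw [hvanish x hx.1 hx.2, mul_zero]
    rw [← Finset.sum_subset (Finset.subset_univ ({k.castSucc, k.succ} :
      Finset (Fin (l + 2)))) hzero] at hsum
    rw [Finset.sum_pair hpairne] at hsum
    rw [hF1, hF2] at hsum
    rw [Fin.coe_castSucc, Fin.val_succ] at hsum
    rw [pow_succ] at hsum
    rcases neg_one_pow_eq_or ℂ (k : ℕ) with h | h <;> rw [h] at hsum
    · linear_combination -hsum
    · linear_combination hsum

lemma uvecs_congr (n l : ℕ) (T T' : Finset (Fin n)) (h : T = T') (hT : T.card = l + 1) :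
    uvecs n l T hT = uvecs n l T' (h ▸ hT) := by
  subst h; rfl

lemma telescope (n m l : ℕ) (f : Fin n → Fin m) (t : Fin (l + 1) → Fin m)
    (ht : Function.Injective t)
    (g g' : Fin m → Fin n) (hg : f ∘ g = id) (hg' : f ∘ g' = id) (v : EA n)
    (hv : ∀ (T : Finset (Fin n)) (hT : T.card = l + 1), (T.image f).card ≤ l →
      pairFun n l (uvecs n l T hT) v = 0) :
    PsiF n l (g ∘ t) v = PsiF n l (g' ∘ t) v := by
  classical
  set hseq : ℕ → Fin (l + 1) → Fin n :=
    fun K j => if (j : ℕ) < K then g' (t j) else g (t j) with hhseq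
  have h0 : hseq 0 = g ∘ t := by
    funext j; simp [hhseq]
  have hl1 : hseq (l + 1) = g' ∘ t := by
    funext j; simp [hhseq, j.isLt]
  have hstep : ∀ K : ℕ, K ≤ l → PsiF n l (hseq K) v = PsiF n l (hseq (K + 1)) v := by
    intro K hKl
    refine step n m l f t ht ⟨K, by omega⟩ (hseq K) (hseq (K + 1)) ?_ ?_ ?_ v hv
    · intro j
      simp only [hhseq]
      split_ifs
      · exact congrFun hg' (t j)
      · exact congrFun hg (t j)
    · intro j
      simp only [hhseq]
      split_ifs
      · exact congrFun hg' (t j)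
      · exact congrFun hg (t j)
    · intro j hjk
      have hjK : (j : ℕ) ≠ K := by
        intro h; exact hjk (Fin.ext h)
      simp only [hhseq]
      split_ifs with h1 h2
      · rfl
      · omega
      · omega
      · rfl
  have main : ∀ K : ℕ, K ≤ l + 1 → PsiF n l (hseq 0) v = PsiF n l (hseq K) v := by
    intro K
    induction K with
    | zero => intro _; rfl
    | succ K ih =>
      intro h
      rw [ih (by omega), hstep K (by omega)]
  rw [← h0, ← hl1]
  exact main (l + 1) le_rfl

lemma main_core (n m l : ℕ) (f : Fin n → Fin m) (g : Fin m → Fin n) (hg : f ∘ g = id)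
    (α : Finset (Fin m)) (hα : α.card = l + 1) (hcard : (α.image g).card = l + 1) :
    ∃ c : ℂ, c ≠ 0 ∧ pairFun n l (uvecs n l (α.image g) hcard)
      = c • PsiF n l (g ∘ (fun j => ((α.orderIsoOfFin hα j : Fin m)))) := by
  classical
  set t : Fin (l + 1) → Fin m := fun j => ((α.orderIsoOfFin hα j : Fin m)) with hts
  have hginj : Function.Injective g :=
    (show Function.LeftInverse f g from fun x => congrFun hg x).injective
  have htinj : Function.Injective t := by
    intro x y h
    exact (α.orderIsoOfFin hα).injective (Subtype.ext h)
  have hα_img : α = Finset.image t Finset.univ := by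
    ext x
    simp only [Finset.mem_image, Finset.mem_univ, true_and]
    constructor
    · intro hx
      refine ⟨(α.orderIsoOfFin hα).symm ⟨x, hx⟩, ?_⟩
      show ((α.orderIsoOfFin hα) ((α.orderIsoOfFin hα).symm ⟨x, hx⟩) : Fin m) = x
      rw [OrderIso.apply_symm_apply]
    · rintro ⟨j, rfl⟩
      exact (α.orderIsoOfFin hα j).2
  have himg : α.image g = Finset.image (g ∘ t) Finset.univ := by
    conv_lhs => rw [hα_img]
    rw [Finset.image_image]
  have hbinj : Function.Injective (g ∘ t) := hginj.comp htinj
  have hTcard : (Finset.image (g ∘ t) Finset.univ).card = l + 1 := by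
    rw [← himg]; exact hcard
  obtain ⟨c, hc, hEq⟩ := PsiF_eq_smul_pairFun n l (g ∘ t) hbinj hTcard
  refine ⟨c⁻¹, inv_ne_zero hc, ?_⟩
  have huv : pairFun n l (uvecs n l (α.image g) hcard)
      = pairFun n l (uvecs n l (Finset.image (g ∘ t) Finset.univ) hTcard) := by
    exact congrArg (pairFun n l)
      (uvecs_congr n l (α.image g) (Finset.image (g ∘ t) Finset.univ) himg hcard)
  rw [huv, hEq, smul_smul, inv_mul_cancel₀ hc, one_smul]

lemma extract_hv (n m l : ℕ) (f : Fin n → Fin m) (x : EA n)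
    (hx : x ∈ specialFlat n m l f) :
    ∀ (T : Finset (Fin n)) (hT : T.card = l + 1), (T.image f).card ≤ l →
      pairFun n l (uvecs n l T hT) x = 0 := by
  intro T hT hbad
  rw [specialFlat, Submodule.mem_inf] at hx
  have h1 := hx.2
  rw [Submodule.mem_iInf] at h1
  have h2 := h1 T
  rw [Submodule.mem_iInf] at h2
  have h3 := h2 hT
  rw [Submodule.mem_iInf] at h3
  have h4 := h3 hbad
  rw [Hplane, Submodule.mem_inf] at h4
  exact LinearMap.mem_ker.mp h4.2

lemma incl_lemma (n m l : ℕ) (f : Fin n → Fin m) (g g' : Fin m → Fin n)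
    (hg : f ∘ g = id) (hg' : f ∘ g' = id)
    (α : Finset (Fin m)) (hα : α.card = l + 1)
    (hcard : (α.image g).card = l + 1) (hcard' : (α.image g').card = l + 1) :
    Hplane n l (α.image g) hcard ⊓ specialFlat n m l f ≤
      Hplane n l (α.image g') hcard' ⊓ specialFlat n m l f := by
  classical
  intro x hx
  rw [Submodule.mem_inf] at hx ⊢
  obtain ⟨hxH, hxF⟩ := hx
  refine ⟨?_, hxF⟩
  rw [Hplane, Submodule.mem_inf] at hxH ⊢
  obtain ⟨hxW, hxker⟩ := hxH
  refine ⟨hxW, ?_⟩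
  rw [LinearMap.mem_ker] at hxker ⊢
  have hv := extract_hv n m l f x hxF
  set t : Fin (l + 1) → Fin m := fun j => ((α.orderIsoOfFin hα j : Fin m)) with hts
  have htinj : Function.Injective t := by
    intro a b h
    exact (α.orderIsoOfFin hα).injective (Subtype.ext h)
  obtain ⟨c, hc, hEq⟩ := main_core n m l f g hg α hα hcard
  obtain ⟨c', hc', hEq'⟩ := main_core n m l f g' hg' α hα hcard'
  have h1 : PsiF n l (g ∘ t) x = 0 := by
    have happ := congrArg (fun L : EA n →ₗ[ℂ] ℂ => L x) hEq
    simp only [LinearMap.smul_apply, smul_eq_mul] at happ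
    rw [hxker] at happ
    exact ((mul_eq_zero.mp happ.symm).resolve_left hc)
  have h2 : PsiF n l (g' ∘ t) x = 0 := by
    rw [← telescope n m l f t htinj g g' hg hg' x hv]
    exact h1
  have happ' := congrArg (fun L : EA n →ₗ[ℂ] ℂ => L x) hEq'
  simp only [LinearMap.smul_apply, smul_eq_mul] at happ'
  rw [happ', h2, mul_zero]

end AuxP

/-- For a surjection `f` with `l+1 ≤ m ≤ n`, sections `g, g′` of `f`, and an `(l+1)`-subset
`α` of `{1,…,m}`: `H_{g(α)} ∩ F_f = H_{g′(α)} ∩ F_f`. -/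
theorem statement_12 (n m l : ℕ) (hn : 1 ≤ n) (hl1 : 1 ≤ l) (hl2 : l ≤ n - 1)
    (hm : l + 1 ≤ m) (hmn : m ≤ n) (f : Fin n → Fin m) (hf : Function.Surjective f)
    (g g' : Fin m → Fin n) (hg : f ∘ g = id) (hg' : f ∘ g' = id)
    (α : Finset (Fin m)) (hα : α.card = l + 1) :
    Hplane n l (α.image g)
        ((Finset.card_image_of_injective α
          (show Function.LeftInverse f g from fun x => congrFun hg x).injective).trans hα)
      ⊓ specialFlat n m l f
    = Hplane n l (α.image g')
        ((Finset.card_image_of_injective α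
          (show Function.LeftInverse f g' from fun x => congrFun hg' x).injective).trans hα)
      ⊓ specialFlat n m l f := by
  apply le_antisymm
  · exact AuxP.incl_lemma n m l f g g' hg hg' α hα _ _
  · exact AuxP.incl_lemma n m l f g' g hg' hg α hα _ _
end
end
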